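/- arXiv:math/0202103 — 2 statements merged into one kernel-verified Lean document; each statement's English description precedes it below -/
import Mathlib

section
/- Let P be a simple polytope, let {v,w} be an edge of its graph G(P), and let S₁, S₂ ⊆ N(v)\{w}. Then Ψ_{(v,w)}(S₁ ∩ S₂) = Ψ_{(v,w)}(S₁) ∩ Ψ_{(v,w)}(S₂). -/
open scoped Classical

abbrev EVec (n : ℕ) := Fin n → ℝ

def IsPolytope {n : ℕ} (P : Set (EVec n)) : Prop :=
  ∃ S : Finset (EVec n), P = convexHull ℝ (S : Set (EVec n))

noncomputable def sdim {n : ℕ} (F : Set (EVec n)) : ℕ :=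
  Module.finrank ℝ (affineSpan ℝ F).direction

def IsFace {n : ℕ} (P F : Set (EVec n)) : Prop :=
  IsExposed ℝ P F ∨ F = ∅ ∨ F = P

def IsKFace {n : ℕ} (P F : Set (EVec n)) (k : ℕ) : Prop :=
  IsFace P F ∧ F.Nonempty ∧ sdim F = k

def IsVertex {n : ℕ} (P : Set (EVec n)) (v : EVec n) : Prop :=
  IsKFace P {v} 0

def Adj {n : ℕ} (P : Set (EVec n)) (v w : EVec n) : Prop :=
  IsKFace P (convexHull ℝ {v, w}) 1

def Neighbors {n : ℕ} (P : Set (EVec n)) (v : EVec n) : Set (EVec n) :=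
  {w | Adj P v w}

def vertSet {n : ℕ} (P : Set (EVec n)) : Set (EVec n) := {v | IsVertex P v}

def vertFace {n : ℕ} (P F : Set (EVec n)) : Set (EVec n) := vertSet P ∩ F

def IsSimplePolytope {n : ℕ} (P : Set (EVec n)) (d : ℕ) : Prop :=
  IsPolytope P ∧ sdim P = d ∧
    ∀ v, IsVertex P v → {F : Set (EVec n) | IsKFace P F (d - 1) ∧ v ∈ F}.ncard = d

/- orientations -/

def IsOrientation {n : ℕ} (P : Set (EVec n)) (O : EVec n → EVec n → Prop) : Prop :=
  (∀ v w, O v w → Adj P v w) ∧ ∀ v w, Adj P v w → (O v w ↔ ¬ O w v)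

def IsAcyclic {n : ℕ} (O : EVec n → EVec n → Prop) : Prop :=
  ∀ v, ¬ Relation.TransGen O v v

def IsSinkOn {n : ℕ} (P : Set (EVec n)) (O : EVec n → EVec n → Prop)
    (W : Set (EVec n)) (w : EVec n) : Prop :=
  w ∈ W ∧ ∀ u ∈ W, Adj P w u → O u w

def IsSourceOn {n : ℕ} (P : Set (EVec n)) (O : EVec n → EVec n → Prop)
    (W : Set (EVec n)) (w : EVec n) : Prop :=
  w ∈ W ∧ ∀ u ∈ W, Adj P w u → O w u

def IsAOF {n : ℕ} (P : Set (EVec n)) (O : EVec n → EVec n → Prop) : Prop :=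
  IsOrientation P O ∧ IsAcyclic O ∧
    ∀ F, IsFace P F → F.Nonempty → ∃! w, IsSinkOn P O (vertFace P F) w

def IsTerminal {n : ℕ} (O : EVec n → EVec n → Prop) (W : Set (EVec n)) : Prop :=
  ∀ v ∈ W, ∀ u, u ∉ W → ¬ O v u

noncomputable def indeg {n : ℕ} (O : EVec n → EVec n → Prop) (v : EVec n) : ℕ :=
  {u | O u v}.ncard

noncomputable def hNum {n : ℕ} (P : Set (EVec n)) (O : EVec n → EVec n → Prop) (k : ℕ) : ℕ :=
  {v | IsVertex P v ∧ indeg O v = k}.ncard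

noncomputable def Hsum {n : ℕ} (P : Set (EVec n)) (d : ℕ) (O : EVec n → EVec n → Prop) : ℕ :=
  ∑ k ∈ Finset.range (d + 1), hNum P O k * 2 ^ k

noncomputable def H2sum {n : ℕ} (P : Set (EVec n)) (d : ℕ) (O : EVec n → EVec n → Prop) : ℕ :=
  ∑ k ∈ Finset.range (d + 1), hNum P O k * Nat.choose k 2

/- walks -/

structure CycSeq (α : Type*) where
  len : ℕ
  seq : ℤ → α

def CycSeq.Periodic {α : Type*} (C : CycSeq α) : Prop :=
  ∀ i : ℤ, C.seq (i + C.len) = C.seq i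

def CycSeq.Equiv {α : Type*} (C C' : CycSeq α) : Prop :=
  C.len = C'.len ∧ ∃ s ε : ℤ, (ε = 1 ∨ ε = -1) ∧ ∀ i : ℤ, C'.seq i = C.seq (ε * i + s)

def IsCSWalk {n : ℕ} (P : Set (EVec n)) (W : CycSeq (EVec n)) : Prop :=
  3 ≤ W.len ∧ W.Periodic ∧
    ∀ i : ℤ, Adj P (W.seq i) (W.seq (i + 1)) ∧ W.seq (i - 1) ≠ W.seq (i + 1)

def Passes {n : ℕ} (W : CycSeq (EVec n)) (i : ℤ) (v₁ v v₂ : EVec n) : Prop :=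
  W.seq i = v ∧
    ((W.seq (i - 1) = v₁ ∧ W.seq (i + 1) = v₂) ∨ (W.seq (i - 1) = v₂ ∧ W.seq (i + 1) = v₁))

def IsFacoidal {n : ℕ} (P : Set (EVec n)) (𝒲 : Set (CycSeq (EVec n))) : Prop :=
  (∀ W ∈ 𝒲, IsCSWalk P W) ∧
  (∀ W ∈ 𝒲, ∀ W', CycSeq.Equiv W W' → W' ∈ 𝒲) ∧
  ∀ v v₁ v₂ : EVec n, IsVertex P v → v₁ ≠ v₂ → Adj P v v₁ → Adj P v v₂ →
    (∃ W ∈ 𝒲, ∃ i : ℤ, Passes W i v₁ v v₂) ∧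
    (∀ W ∈ 𝒲, ∀ W' ∈ 𝒲, ∀ i i' : ℤ,
        Passes W i v₁ v v₂ → Passes W' i' v₁ v v₂ → CycSeq.Equiv W W') ∧
    (∀ W ∈ 𝒲, ∀ i i' : ℤ,
        Passes W i v₁ v v₂ → Passes W i' v₁ v v₂ → (W.len : ℤ) ∣ (i - i'))

def IsFaceWalk {n : ℕ} (P : Set (EVec n)) (W : CycSeq (EVec n)) (F : Set (EVec n)) : Prop :=
  IsCSWalk P W ∧ (∀ i j : ℤ, W.seq i = W.seq j → (W.len : ℤ) ∣ (i - j)) ∧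
    vertFace P F = Set.range W.seq

def twoFaceWalks {n : ℕ} (P : Set (EVec n)) : Set (CycSeq (EVec n)) :=
  {W | ∃ F, IsKFace P F 2 ∧ IsFaceWalk P W F}

noncomputable def numWalks {n : ℕ} (𝒲 : Set (CycSeq (EVec n))) : ℕ :=
  ((fun W => Quot.mk CycSeq.Equiv W) '' 𝒲).ncard

noncomputable def f₂ {n : ℕ} (P : Set (EVec n)) : ℕ := {F : Set (EVec n) | IsKFace P F 2}.ncard

def WalkSinkAt {n : ℕ} (O : EVec n → EVec n → Prop) (W : CycSeq (EVec n)) (i : ℤ) : Prop :=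
  O (W.seq (i - 1)) (W.seq i) ∧ O (W.seq (i + 1)) (W.seq i)

noncomputable def numWalkSinks {n : ℕ} (O : EVec n → EVec n → Prop)
    (W : CycSeq (EVec n)) : ℕ :=
  ((Finset.range W.len).filter (fun i => WalkSinkAt O W (i : ℤ))).card

/- the graph Λ(G(P)) -/

def P2nodes {n : ℕ} (P : Set (EVec n)) : Set (EVec n × Sym2 (EVec n)) :=
  {p | ∃ v₁ v₂ : EVec n, p.2 = s(v₁, v₂) ∧ v₁ ≠ v₂ ∧ Adj P p.1 v₁ ∧ Adj P p.1 v₂}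

def LambdaAdj {n : ℕ} (P : Set (EVec n)) (p q : EVec n × Sym2 (EVec n)) : Prop :=
  p ∈ P2nodes P ∧ q ∈ P2nodes P ∧ p.1 ≠ q.1 ∧
    ∃ x y, x ∈ p.2 ∧ y ∈ q.2 ∧ s(p.1, x) = s(q.1, y)

def IsCycleIn {α : Type*} (A : α → α → Prop) (C : CycSeq α) : Prop :=
  3 ≤ C.len ∧ C.Periodic ∧ (∀ i : ℤ, A (C.seq i) (C.seq (i + 1))) ∧
    ∀ i j : ℤ, C.seq i = C.seq j → (C.len : ℤ) ∣ (i - j)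

def IsTwoFactor {α : Type*} (Nd : Set α) (A : α → α → Prop) (𝒞 : Set (CycSeq α)) : Prop :=
  (∀ C ∈ 𝒞, IsCycleIn A C) ∧
  (∀ C ∈ 𝒞, ∀ C', CycSeq.Equiv C C' → C' ∈ 𝒞) ∧
  ∀ p ∈ Nd, (∃ C ∈ 𝒞, ∃ i : ℤ, C.seq i = p) ∧
    ∀ C ∈ 𝒞, ∀ C' ∈ 𝒞, (∃ i : ℤ, C.seq i = p) → (∃ i : ℤ, C'.seq i = p) → CycSeq.Equiv C C'

/- spanned faces -/

def Spans {n : ℕ} (P : Set (EVec n)) (v : EVec n) (S F : Set (EVec n)) : Prop :=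
  IsKFace P F S.ncard ∧ v ∈ F ∧ S ⊆ F ∧ ∀ u ∈ Neighbors P v \ S, u ∉ F


/- ===== auxiliary development ===== -/

section Aux

variable {n : ℕ}

lemma hull_le {V : Set (EVec n)} {f : EVec n →L[ℝ] ℝ} {c : ℝ}
    (h : ∀ u ∈ V, f u ≤ c) {x : EVec n} (hx : x ∈ convexHull ℝ V) : f x ≤ c := by
  have hconv : Convex ℝ {y : EVec n | f y ≤ c} :=
    convex_halfSpace_le ⟨f.map_add, f.map_smul⟩ c
  exact convexHull_min h hconv hx

lemma exposed_eq_level {Q F : Set (EVec n)} {f : EVec n →L[ℝ] ℝ} {v : EVec n}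
    (hv : v ∈ Q) (hmax : ∀ y ∈ Q, f y ≤ f v)
    (hF : F = {x ∈ Q | ∀ y ∈ Q, f y ≤ f x}) :
    F = {x ∈ Q | f x = f v} := by
  subst hF
  ext x
  simp only [Set.mem_setOf_eq]
  constructor
  · rintro ⟨hxQ, hall⟩
    exact ⟨hxQ, le_antisymm (hmax x hxQ) (hall v hv)⟩
  · rintro ⟨hxQ, heq⟩
    exact ⟨hxQ, fun y hy => (hmax y hy).trans heq.ge⟩

/-- The level set of a continuous linear functional, as an affine subspace. -/
noncomputable def levelAff (f : EVec n →L[ℝ] ℝ) (c : ℝ) : AffineSubspace ℝ (EVec n) where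
  carrier := {x | f x = c}
  smul_vsub_vadd_mem' := by
    intro t p₁ p₂ p₃ h₁ h₂ h₃
    simp only [Set.mem_setOf_eq] at *
    simp [vsub_eq_sub, vadd_eq_add, map_add, map_smul, map_sub, h₁, h₂, h₃]

lemma mem_levelAff {f : EVec n →L[ℝ] ℝ} {c : ℝ} {x : EVec n} :
    x ∈ levelAff f c ↔ f x = c := Iff.rfl

lemma level_convexHull (V : Finset (EVec n)) (f : EVec n →L[ℝ] ℝ) (M : ℝ)
    (hM : ∀ u ∈ V, f u ≤ M) :
    {x ∈ convexHull ℝ (V : Set (EVec n)) | f x = M}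
      = convexHull ℝ ((V.filter (fun u => f u = M) : Finset (EVec n)) : Set (EVec n)) := by
  ext x
  constructor
  · rintro ⟨hxQ, hfx⟩
    obtain ⟨w, hw0, hw1, hwx⟩ := Finset.mem_convexHull'.1 hxQ
    have hsum0 : ∑ u ∈ V, w u * (M - f u) = 0 := by
      have h1 : ∑ u ∈ V, w u * (M - f u)
          = M * (∑ u ∈ V, w u) - (∑ u ∈ V, w u * f u) := by
        rw [Finset.mul_sum, ← Finset.sum_sub_distrib]
        apply Finset.sum_congr rfl
        intro u _; ring
      have h2 : (∑ u ∈ V, w u * f u) = f x := by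
        rw [← hwx, map_sum]
        apply Finset.sum_congr rfl
        intro u _; simp [map_smul]
      rw [h1, h2, hw1, hfx]; ring
    have hzero : ∀ u ∈ V, ¬ (f u = M) → w u = 0 := by
      intro u hu hne
      have hterm : ∀ y ∈ V, 0 ≤ w y * (M - f y) := fun y hy =>
        mul_nonneg (hw0 y hy) (by linarith [hM y hy])
      have := (Finset.sum_eq_zero_iff_of_nonneg hterm).1 hsum0 u hu
      rcases mul_eq_zero.1 this with h | h
      · exact h
      · exact absurd (by linarith : f u = M) hne
    refine Finset.mem_convexHull'.2 ⟨w, ?_, ?_, ?_⟩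
    · intro y hy; exact hw0 y (Finset.mem_filter.1 hy).1
    · rw [← hw1]
      apply Finset.sum_subset (Finset.filter_subset _ _)
      intro u hu hnu
      exact hzero u hu (fun h => hnu (Finset.mem_filter.2 ⟨hu, h⟩))
    · rw [← hwx]
      apply Finset.sum_subset (Finset.filter_subset _ _)
      intro u hu hnu
      rw [hzero u hu (fun h => hnu (Finset.mem_filter.2 ⟨hu, h⟩)), zero_smul]
  · intro hx
    have hsub : ((V.filter (fun u => f u = M) : Finset (EVec n)) : Set (EVec n))
        ⊆ (V : Set (EVec n)) := by
      intro u hu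
      have hu' : u ∈ V.filter (fun u => f u = M) := Finset.mem_coe.1 hu
      exact Finset.mem_coe.2 (Finset.mem_filter.1 hu').1
    have h1 : x ∈ convexHull ℝ (V : Set (EVec n)) := convexHull_mono hsub hx
    refine ⟨h1, le_antisymm (hull_le hM h1) ?_⟩
    have hge : ∀ u ∈ ((V.filter (fun u => f u = M) : Finset (EVec n)) : Set (EVec n)),
        (-f) u ≤ -M := by
      intro u hu
      have : f u = M := (Finset.mem_filter.1 (Finset.mem_coe.1 hu)).2
      simp [this]
    have := hull_le hge hx
    simp only [ContinuousLinearMap.neg_apply] at this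
    linarith

lemma sdim_lt_of_proper {Q F : Set (EVec n)} (f : EVec n →L[ℝ] ℝ) {v : EVec n}
    (hvF : v ∈ F) (hF : F = {x ∈ Q | f x = f v}) (hne : F ≠ Q) : sdim F < sdim Q := by
  have hFQ : F ⊆ Q := by rw [hF]; exact fun x hx => hx.1
  have hle : (affineSpan ℝ F).direction ≤ (affineSpan ℝ Q).direction :=
    AffineSubspace.direction_le (affineSpan_mono ℝ hFQ)
  have hfin : sdim F ≤ sdim Q := Submodule.finrank_mono hle
  refine lt_of_le_of_ne hfin (fun heq => hne ?_)
  have hdir : (affineSpan ℝ F).direction = (affineSpan ℝ Q).direction :=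
    Submodule.eq_of_le_of_finrank_eq hle heq
  have hspan : affineSpan ℝ F = affineSpan ℝ Q :=
    (AffineSubspace.eq_iff_direction_eq_of_mem
      (subset_affineSpan ℝ F hvF) (subset_affineSpan ℝ Q (hFQ hvF))).2 hdir
  have hlev : affineSpan ℝ F ≤ levelAff f (f v) := by
    rw [affineSpan_le]
    intro x hx
    rw [hF] at hx
    exact hx.2
  apply Set.Subset.antisymm hFQ
  intro y hyQ
  have hy1 : y ∈ affineSpan ℝ Q := subset_affineSpan ℝ Q hyQ
  rw [← hspan] at hy1
  have : f y = f v := hlev hy1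
  rw [hF]; exact ⟨hyQ, this⟩

lemma apply_eq_zero_of_const {Q : Set (EVec n)} {ψ : EVec n →L[ℝ] ℝ} {c : ℝ}
    (hc : ∀ y ∈ Q, ψ y = c) {k : EVec n}
    (hk : k ∈ (affineSpan ℝ Q).direction) (hQ : Q.Nonempty) : ψ k = 0 := by
  have hlev : affineSpan ℝ Q ≤ levelAff ψ c := by
    rw [affineSpan_le]; exact fun y hy => hc y hy
  have hk' := AffineSubspace.direction_le hlev hk
  obtain ⟨q, hq⟩ := hQ
  have hmem : q ∈ levelAff ψ c := hc q hq
  obtain ⟨p₁, hp₁, p₂, hp₂, rfl⟩ :=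
    (AffineSubspace.mem_direction_iff_eq_vsub ⟨q, hmem⟩ _).1 hk'
  have e1 : ψ p₁ = c := hp₁
  have e2 : ψ p₂ = c := hp₂
  show ψ (p₁ - p₂) = 0
  rw [map_sub, e1, e2, sub_self]

lemma sdim_pair {v u : EVec n} (h : u ≠ v) :
    sdim (convexHull ℝ ({v, u} : Set (EVec n))) = 1 := by
  unfold sdim
  rw [affineSpan_convexHull, direction_affineSpan, vectorSpan_pair]
  exact finrank_span_singleton (by simpa [vsub_eq_sub, sub_eq_zero] using (Ne.symm h))

lemma eq_singleton_of_sdim_eq_zero {Q : Set (EVec n)} (h0 : sdim Q = 0) {v : EVec n}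
    (hv : v ∈ Q) : Q = {v} := by
  have hbot : (affineSpan ℝ Q).direction = ⊥ := Submodule.finrank_eq_zero.1 h0
  apply Set.eq_singleton_iff_unique_mem.2 ⟨hv, fun y hy => ?_⟩
  have hmem : y -ᵥ v ∈ (affineSpan ℝ Q).direction :=
    AffineSubspace.vsub_mem_direction (subset_affineSpan ℝ Q hy) (subset_affineSpan ℝ Q hv)
  rw [hbot, Submodule.mem_bot] at hmem
  have : y - v = 0 := hmem
  exact sub_eq_zero.1 this

lemma face_subset {P F : Set (EVec n)} (h : IsFace P F) : F ⊆ P := by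
  rcases h with h | h | h
  · exact h.subset
  · rw [h]; exact Set.empty_subset P
  · rw [h]

lemma face_inter {P F G : Set (EVec n)} (hF : IsFace P F) (hG : IsFace P G) :
    IsFace P (F ∩ G) := by
  rcases hF with hF | hF | hF
  · rcases hG with hG | hG | hG
    · exact Or.inl (hF.inter hG)
    · right; left; rw [hG, Set.inter_empty]
    · left; rwa [hG, Set.inter_eq_self_of_subset_left hF.subset]
  · right; left; rw [hF, Set.empty_inter]
  · rw [hF, Set.inter_eq_self_of_subset_right (face_subset hG)]; exact hG

lemma vertex_extreme {P : Set (EVec n)} {v : EVec n} (hv : IsVertex P v) :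
    IsExtreme ℝ P {v} := by
  rcases hv.1 with h | h | h
  · exact h.isExtreme
  · exact absurd h (by simp)
  · rw [← h]

lemma extreme_mono {A B : Set (EVec n)} {v : EVec n} (h : IsExtreme ℝ A {v})
    (hBA : B ⊆ A) (hvB : v ∈ B) : IsExtreme ℝ B {v} :=
  ⟨Set.singleton_subset_iff.2 hvB,
    fun _ h₁ _ h₂ _ hx hseg => h.2 (hBA h₁) (hBA h₂) hx hseg⟩

end Aux

section Aux2

variable {n : ℕ}

lemma face_trans_exposed (V : Finset (EVec n)) {F E' : Set (EVec n)}
    (hF : IsExposed ℝ (convexHull ℝ (V : Set (EVec n))) F) (hE : IsFace F E') :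
    IsFace (convexHull ℝ (V : Set (EVec n))) E' := by
  set Q := convexHull ℝ (V : Set (EVec n)) with hQdef
  rcases hE with hEexp | hEe | hEF
  · rcases Set.eq_empty_or_nonempty E' with rfl | hne
    · right; left; rfl
    obtain ⟨φ, hφ⟩ := hEexp hne
    have hEsubF : E' ⊆ F := hEexp.subset
    have hFne : F.Nonempty := hne.mono hEsubF
    obtain ⟨ψ, hψ⟩ := hF hFne
    obtain ⟨v₀, hv₀⟩ := hFne
    have hv₀' : v₀ ∈ {x ∈ Q | ∀ y ∈ Q, ψ y ≤ ψ x} := by rw [← hψ]; exact hv₀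
    have hFlev : F = {x ∈ Q | ψ x = ψ v₀} := exposed_eq_level hv₀'.1 hv₀'.2 hψ
    have hMV : ∀ u ∈ V, ψ u ≤ ψ v₀ := fun u hu =>
      hv₀'.2 u (subset_convexHull ℝ _ (Finset.mem_coe.2 hu))
    set A := V.filter (fun u => ψ u = ψ v₀) with hA
    have hFA : F = convexHull ℝ (A : Set (EVec n)) := by
      rw [hFlev]; exact level_convexHull V ψ (ψ v₀) hMV
    obtain ⟨e₀, he₀⟩ := hne
    have he₀' : e₀ ∈ {x ∈ F | ∀ y ∈ F, φ y ≤ φ x} := by rw [← hφ]; exact he₀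
    have hElev : E' = {x ∈ F | φ x = φ e₀} := exposed_eq_level he₀'.1 he₀'.2 hφ
    have hMA : ∀ u ∈ A, φ u ≤ φ e₀ := fun u hu =>
      he₀'.2 u (by rw [hFA]; exact subset_convexHull ℝ _ (Finset.mem_coe.2 hu))
    set B := A.filter (fun u => φ u = φ e₀) with hB
    have hEB : E' = convexHull ℝ (B : Set (EVec n)) := by
      rw [hElev, hFA]
      exact level_convexHull A φ (φ e₀) hMA
    set T := V.filter (fun u => ¬ ψ u = ψ v₀) with hT
    set b : EVec n → ℝ := fun u => (ψ v₀ - ψ u) / (max (φ u - φ e₀) 0 + 1) with hb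
    set ε : ℝ := (insert (1:ℝ) (T.image b)).min' (Finset.insert_nonempty _ _) with hε
    have hTlt : ∀ u ∈ T, ψ u < ψ v₀ := by
      intro u hu
      obtain ⟨huV, hune⟩ := Finset.mem_filter.1 hu
      exact lt_of_le_of_ne (hMV u huV) hune
    have hε0 : 0 < ε := by
      have hmem := (insert (1:ℝ) (T.image b)).min'_mem (Finset.insert_nonempty _ _)
      rw [← hε] at hmem
      rcases Finset.mem_insert.1 hmem with h1 | h2
      · rw [h1]; norm_num
      · obtain ⟨u, hu, hbu⟩ := Finset.mem_image.1 h2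
        rw [← hbu]
        apply div_pos (by linarith [hTlt u hu])
        have : (0:ℝ) ≤ max (φ u - φ e₀) 0 := le_max_right _ _
        linarith
    have hεb : ∀ u ∈ T, ε ≤ b u := fun u hu =>
      Finset.min'_le _ _ (Finset.mem_insert_of_mem (Finset.mem_image_of_mem b hu))
    set χ : EVec n →L[ℝ] ℝ := ψ + ε • φ with hχ
    have hχval : ∀ x, χ x = ψ x + ε * φ x := by
      intro x; simp [hχ]
    set c : ℝ := ψ v₀ + ε * φ e₀ with hc
    have key : ∀ u ∈ V, χ u ≤ c ∧ (χ u = c ↔ u ∈ B) := by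
      intro u hu
      by_cases hu1 : ψ u = ψ v₀
      · have huA : u ∈ A := Finset.mem_filter.2 ⟨hu, hu1⟩
        have hφu : φ u ≤ φ e₀ := hMA u huA
        constructor
        · rw [hχval, hu1, hc]
          have := mul_le_mul_of_nonneg_left hφu hε0.le
          linarith
        · constructor
          · intro heq
            rw [hχval, hu1, hc] at heq
            have : φ u = φ e₀ := by
              have h1 : ε * φ u = ε * φ e₀ := by linarith
              exact mul_left_cancel₀ hε0.ne' h1
            exact Finset.mem_filter.2 ⟨huA, this⟩
          · intro huB
            have : φ u = φ e₀ := (Finset.mem_filter.1 huB).2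
            rw [hχval, hu1, this, hc]
      · have huT : u ∈ T := Finset.mem_filter.2 ⟨hu, hu1⟩
        have hδ : 0 < ψ v₀ - ψ u := by linarith [hTlt u huT]
        have hstrict : χ u < c := by
          rw [hχval, hc]
          by_cases hφu : φ u ≤ φ e₀
          · have : ε * φ u ≤ ε * φ e₀ := mul_le_mul_of_nonneg_left hφu hε0.le
            linarith
          · push_neg at hφu
            have hm : 0 < φ u - φ e₀ := by linarith
            have hmax : max (φ u - φ e₀) 0 = φ u - φ e₀ := max_eq_left hm.le
            have hεle := hεb u huT
            rw [hb] at hεle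
            simp only [hmax] at hεle
            have h1 : ε * ((φ u - φ e₀) + 1) ≤ ψ v₀ - ψ u :=
              (le_div_iff₀ (by linarith)).1 hεle
            nlinarith
        refine ⟨hstrict.le, ?_, ?_⟩
        · intro heq; exact absurd heq hstrict.ne
        · intro huB
          exact absurd (Finset.mem_filter.1 (Finset.mem_filter.1 huB).1).2 hu1
    have hBne : B.Nonempty := by
      by_contra hBe
      rw [Finset.not_nonempty_iff_eq_empty] at hBe
      rw [hBe] at hEB
      simp at hEB
      exact absurd (hEB ▸ he₀) (Set.notMem_empty e₀)
    obtain ⟨b₀, hb₀⟩ := hBne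
    have hb₀V : b₀ ∈ V := (Finset.mem_filter.1 (Finset.mem_filter.1 hb₀).1).1
    have hb₀Q : b₀ ∈ Q := subset_convexHull ℝ _ (Finset.mem_coe.2 hb₀V)
    have hχb₀ : χ b₀ = c := ((key b₀ hb₀V).2).2 hb₀
    have hQmax : ∀ y ∈ Q, χ y ≤ χ b₀ := by
      rw [hχb₀]
      exact fun y hy => hull_le (fun u hu => (key u (Finset.mem_coe.1 hu)).1) hy
    have hfilter : V.filter (fun u => χ u = c) = B := by
      apply Finset.ext
      intro u
      constructor
      · intro hu
        obtain ⟨huV, hueq⟩ := Finset.mem_filter.1 hu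
        exact ((key u huV).2).1 hueq
      · intro huB
        have huV : u ∈ V := (Finset.mem_filter.1 (Finset.mem_filter.1 huB).1).1
        exact Finset.mem_filter.2 ⟨huV, ((key u huV).2).2 huB⟩
    have hclaim : {x ∈ Q | ∀ y ∈ Q, χ y ≤ χ x} = E' := by
      rw [exposed_eq_level hb₀Q hQmax rfl, hχb₀]
      rw [level_convexHull V χ c (fun u hu => (key u hu).1), hfilter, ← hEB]
    exact Or.inl (fun _ => ⟨χ, hclaim.symm⟩)
  · right; left; exact hEe
  · left; rw [hEF]; exact hF

lemma constr (V : Finset (EVec n)) {v : EVec n} (h g : EVec n →L[ℝ] ℝ)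
    (hstrict : ∀ y ∈ convexHull ℝ (V : Set (EVec n)), y ≠ v → h y < h v)
    (himp : ∃ u ∈ V, g v < g u) :
    ∃ s : ℝ, 0 < s ∧ ∃ u' ∈ V, g v < g u' ∧
      (∀ y ∈ convexHull ℝ (V : Set (EVec n)), (s • h + g) y ≤ (s • h + g) v) ∧
      (s • h + g) u' = (s • h + g) v := by
  classical
  set W := V.filter (fun u => g v < g u) with hW
  have hWne : W.Nonempty := by
    obtain ⟨u, hu, hgu⟩ := himp
    exact ⟨u, Finset.mem_filter.2 ⟨hu, hgu⟩⟩
  set ρ : EVec n → ℝ := fun u => (g u - g v) / (h v - h u) with hρ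
  obtain ⟨u', hu'W, hu'max⟩ := W.exists_max_image ρ hWne
  obtain ⟨hu'V, hgu'⟩ := Finset.mem_filter.1 hu'W
  have hu'ne : u' ≠ v := fun hc => by rw [hc] at hgu'; exact lt_irrefl _ hgu'
  have hden : 0 < h v - h u' := by
    have := hstrict u' (subset_convexHull ℝ _ (Finset.mem_coe.2 hu'V)) hu'ne
    linarith
  set s : ℝ := (g u' - g v) / (h v - h u') with hsdef
  have hs : 0 < s := div_pos (by linarith) hden
  have hval : ∀ x, (s • h + g) x = s * h x + g x := by intro x; simp
  have keyeq : (s • h + g) u' = (s • h + g) v := by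
    rw [hval, hval]
    have : s * (h v - h u') = g u' - g v := by
      rw [hsdef]; field_simp
    nlinarith [this]
  have key : ∀ u ∈ V, (s • h + g) u ≤ (s • h + g) v := by
    intro u hu
    rw [hval, hval]
    by_cases hgu : g v < g u
    · have huW : u ∈ W := Finset.mem_filter.2 ⟨hu, hgu⟩
      have hune : u ≠ v := fun hc => by rw [hc] at hgu; exact lt_irrefl _ hgu
      have hdenu : 0 < h v - h u := by
        have := hstrict u (subset_convexHull ℝ _ (Finset.mem_coe.2 hu)) hune
        linarith
      have hle : ρ u ≤ s := by
        have := hu'max u huW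
        rw [hρ] at this
        exact this
      rw [hρ] at hle
      have : g u - g v ≤ s * (h v - h u) := by
        rw [div_le_iff₀ hdenu] at hle
        linarith [hle]
      linarith
    · push_neg at hgu
      by_cases huv : u = v
      · rw [huv]
      · have := hstrict u (subset_convexHull ℝ _ (Finset.mem_coe.2 hu)) huv
        nlinarith
  refine ⟨s, hs, u', hu'V, hgu', ?_, keyeq⟩
  intro y hy
  exact hull_le (fun u hu => key u (Finset.mem_coe.1 hu)) hy

lemma exposer (V : Finset (EVec n)) {v : EVec n}
    (hv : IsExtreme ℝ (convexHull ℝ (V : Set (EVec n))) {v}) :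
    ∃ h : EVec n →L[ℝ] ℝ, ∀ y ∈ convexHull ℝ (V : Set (EVec n)), y ≠ v → h y < h v := by
  classical
  have hvQ : v ∈ convexHull ℝ (V : Set (EVec n)) := hv.1 rfl
  have hvV : v ∈ V := by
    have hext : v ∈ (convexHull ℝ (V : Set (EVec n))).extremePoints ℝ :=
      isExtreme_singleton.1 hv
    exact Finset.mem_coe.1 (extremePoints_convexHull_subset hext)
  set V₀ := V.erase v with hV₀
  by_cases hV₀ne : V₀.Nonempty
  · have hvnot : v ∉ convexHull ℝ (V₀ : Set (EVec n)) := by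
      intro hcon
      have hsub : (V : Set (EVec n)) ⊆ convexHull ℝ (V₀ : Set (EVec n)) := by
        intro u hu
        rcases eq_or_ne u v with rfl | hne
        · exact hcon
        · exact subset_convexHull ℝ _
            (Finset.mem_coe.2 (Finset.mem_erase.2 ⟨hne, Finset.mem_coe.1 hu⟩))
      have hQeq : convexHull ℝ (V : Set (EVec n)) = convexHull ℝ (V₀ : Set (EVec n)) :=
        le_antisymm (convexHull_min hsub (convex_convexHull ℝ _))
          (convexHull_mono (by exact_mod_cast Finset.erase_subset v V))
      have hext : v ∈ (convexHull ℝ (V₀ : Set (EVec n))).extremePoints ℝ := by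
        rw [← hQeq]; exact isExtreme_singleton.1 hv
      have := extremePoints_convexHull_subset hext
      exact (Finset.mem_erase.1 (Finset.mem_coe.1 this)).1 rfl
    obtain ⟨f, u, hfa, hfu⟩ := geometric_hahn_banach_closed_point
      (convex_convexHull ℝ _) (V₀.finite_toSet.isCompact_convexHull ℝ).isClosed hvnot
    refine ⟨f, ?_⟩
    intro y hy hyne
    have h1 : (V : Set (EVec n)) ⊆ insert v (V₀ : Set (EVec n)) := by
      intro u hu
      rcases eq_or_ne u v with rfl | hne
      · exact Set.mem_insert _ _
      · exact Set.mem_insert_of_mem _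
          (Finset.mem_coe.2 (Finset.mem_erase.2 ⟨hne, Finset.mem_coe.1 hu⟩))
    have h2 : y ∈ convexHull ℝ (insert v (V₀ : Set (EVec n))) := convexHull_mono h1 hy
    rw [convexHull_insert (Finset.coe_nonempty.2 hV₀ne)] at h2
    obtain ⟨a', ha', z, hz, hseg⟩ := mem_convexJoin.1 h2
    rw [Set.mem_singleton_iff] at ha'
    rw [ha'] at hseg
    obtain ⟨a, b, ha, hb, hab, hy'⟩ := hseg
    have hbne : b ≠ 0 := by
      intro h0
      rw [h0] at hab hy'
      rw [add_zero] at hab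
      rw [hab] at hy'
      simp at hy'
      exact hyne hy'.symm
    have hbpos : 0 < b := lt_of_le_of_ne hb (Ne.symm hbne)
    have hz' : f z < f v := lt_trans (hfa z hz) hfu
    have hfy : f y = a * f v + b * f z := by
      rw [← hy']; simp
    have hkey : 0 < b * (f v - f z) := mul_pos hbpos (sub_pos.2 hz')
    have ha1 : a = 1 - b := by linarith
    rw [hfy, ha1]
    nlinarith [hkey]
  · rw [Finset.not_nonempty_iff_eq_empty] at hV₀ne
    have hVv : V = {v} := by
      apply Finset.eq_singleton_iff_unique_mem.2
      refine ⟨hvV, fun u hu => ?_⟩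
      by_contra hne
      have : u ∈ V₀ := Finset.mem_erase.2 ⟨hne, hu⟩
      rw [hV₀ne] at this
      exact absurd this (Finset.notMem_empty u)
    refine ⟨0, ?_⟩
    intro y hy hyne
    rw [hVv] at hy
    simp at hy
    exact absurd hy hyne

end Aux2

section Aux3

variable {n : ℕ}

set_option maxHeartbeats 1600000 in
lemma edge_exists : ∀ (k : ℕ) (V : Finset (EVec n)) (v : EVec n),
    IsExtreme ℝ (convexHull ℝ (V : Set (EVec n))) {v} →
    sdim (convexHull ℝ (V : Set (EVec n))) ≤ k →
    (∃ q ∈ convexHull ℝ (V : Set (EVec n)), q ≠ v) →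
    ∃ u, u ≠ v ∧ u ∈ convexHull ℝ (V : Set (EVec n)) ∧
      IsFace (convexHull ℝ (V : Set (EVec n))) (convexHull ℝ ({v, u} : Set (EVec n))) := by
  intro k
  induction k with
  | zero =>
    intro V v hv hd hne
    exfalso
    obtain ⟨q, hq, hqne⟩ := hne
    have h0 : sdim (convexHull ℝ (V : Set (EVec n))) = 0 := Nat.le_zero.1 hd
    have hsing := eq_singleton_of_sdim_eq_zero h0 (hv.1 rfl)
    rw [hsing] at hq
    exact hqne hq
  | succ k ih =>
    intro V v hv hd hne
    set Q := convexHull ℝ (V : Set (EVec n)) with hQdef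
    have hvQ : v ∈ Q := hv.1 rfl
    by_cases h0 : sdim Q = 0
    · exfalso
      obtain ⟨q, hq, hqne⟩ := hne
      have hsing := eq_singleton_of_sdim_eq_zero h0 hvQ
      rw [hsing] at hq
      exact hqne hq
    by_cases h1 : sdim Q = 1
    · -- one-dimensional case : Q is a segment with endpoint v
      have hDne : (affineSpan ℝ Q).direction ≠ ⊥ := by
        intro hb
        apply h0
        unfold sdim
        rw [hb]
        exact finrank_bot ℝ _
      obtain ⟨e, heD, hene⟩ := Submodule.exists_mem_ne_zero_of_ne_bot hDne
      have hspan : Submodule.span ℝ {e} = (affineSpan ℝ Q).direction := by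
        apply Submodule.eq_of_le_of_finrank_eq
          ((Submodule.span_singleton_le_iff_mem _ _).2 heD)
        rw [finrank_span_singleton hene]
        exact h1.symm
      obtain ⟨i, hi⟩ : ∃ i, e i ≠ 0 := by
        by_contra hc; push_neg at hc; exact hene (funext hc)
      set ℓ : EVec n →L[ℝ] ℝ := (e i)⁻¹ • ContinuousLinearMap.proj i with hℓ
      have hℓe : ℓ e = 1 := by
        rw [hℓ]
        simp only [ContinuousLinearMap.smul_apply, ContinuousLinearMap.proj_apply,
          smul_eq_mul]
        exact inv_mul_cancel₀ hi
      have hcoord : ∀ u ∈ Q, u - v = (ℓ u - ℓ v) • e := by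
        intro u hu
        have hmem : u - v ∈ Submodule.span ℝ {e} := by
          rw [hspan]
          exact AffineSubspace.vsub_mem_direction
            (subset_affineSpan ℝ _ hu) (subset_affineSpan ℝ _ hvQ)
        obtain ⟨t, ht⟩ := Submodule.mem_span_singleton.1 hmem
        have htl : ℓ u - ℓ v = t := by
          calc ℓ u - ℓ v = ℓ (u - v) := (map_sub ℓ u v).symm
            _ = ℓ (t • e) := by rw [← ht]
            _ = t := by rw [map_smul, hℓe, smul_eq_mul, mul_one]
        rw [htl]
        exact ht.symm
      have hinner : ∀ (e' : EVec n) (ℓ' : EVec n →L[ℝ] ℝ),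
          (∀ u ∈ Q, u - v = (ℓ' u - ℓ' v) • e') →
          (∀ u ∈ V, ℓ' v ≤ ℓ' u) →
          ∃ u, u ≠ v ∧ u ∈ Q ∧ IsFace Q (convexHull ℝ ({v, u} : Set (EVec n))) := by
        intro e' ℓ' hco hpos
        have hVne : V.Nonempty := by
          obtain ⟨q, hq, _⟩ := hne
          by_contra hVe
          rw [Finset.not_nonempty_iff_eq_empty] at hVe
          rw [hQdef, hVe] at hq
          simp at hq
        obtain ⟨u', hu'V, hu'max⟩ := V.exists_max_image (fun u => ℓ' u) hVne
        have hτ0 : 0 ≤ ℓ' u' - ℓ' v := by have := hpos u' hu'V; linarith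
        by_cases hττ : ℓ' u' - ℓ' v = 0
        · exfalso
          obtain ⟨q, hq, hqne⟩ := hne
          apply hqne
          have hub : ∀ u ∈ (V : Set (EVec n)), ℓ' u ≤ ℓ' v := by
            intro u hu
            have h1 := hu'max u (Finset.mem_coe.1 hu)
            linarith
          have hq1 : ℓ' q ≤ ℓ' v := hull_le hub hq
          have hq2 : ℓ' v ≤ ℓ' q := by
            have := hull_le (f := -ℓ') (c := -(ℓ' v))
              (fun u hu => by
                simp only [ContinuousLinearMap.neg_apply, neg_le_neg_iff]
                exact hpos u (Finset.mem_coe.1 hu)) hq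
            simp only [ContinuousLinearMap.neg_apply] at this
            linarith
          have hsub0 : q - v = (0:ℝ) • e' := by
            rw [hco q hq, show ℓ' q - ℓ' v = 0 from by linarith]
          rw [zero_smul] at hsub0
          exact sub_eq_zero.1 hsub0
        · have hτpos : 0 < ℓ' u' - ℓ' v := lt_of_le_of_ne hτ0 (Ne.symm hττ)
          have hu'ne : u' ≠ v := by
            intro hc; rw [hc] at hτpos; simp at hτpos
          have hu'Q : u' ∈ Q := subset_convexHull ℝ _ (Finset.mem_coe.2 hu'V)
          refine ⟨u', hu'ne, hu'Q, ?_⟩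
          right; right
          apply Set.Subset.antisymm
          · apply convexHull_min ?_ (convex_convexHull ℝ _)
            intro x hx
            rcases hx with rfl | hx
            · exact hvQ
            · rw [Set.mem_singleton_iff] at hx; rw [hx]; exact hu'Q
          · rw [hQdef]
            apply convexHull_min ?_ (convex_convexHull ℝ _)
            intro x hxV
            have hxQ : x ∈ Q := subset_convexHull ℝ _ hxV
            have ht0 : 0 ≤ ℓ' x - ℓ' v := by
              have := hpos x (Finset.mem_coe.1 hxV); linarith
            have htτ : ℓ' x - ℓ' v ≤ ℓ' u' - ℓ' v := by
              have := hu'max x (Finset.mem_coe.1 hxV); linarith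
            rw [convexHull_pair]
            set τ := ℓ' u' - ℓ' v
            set t := ℓ' x - ℓ' v
            refine ⟨1 - t/τ, t/τ, ?_, ?_, by ring, ?_⟩
            · have : t/τ ≤ 1 := (div_le_one hτpos).2 htτ
              linarith
            · positivity
            · have hu'eq : u' = v + τ • e' := by
                have := hco u' hu'Q
                have h2 : u' - v = τ • e' := this
                linear_combination (norm := module) h2
              have hxeq : x = v + t • e' := by
                have h2 : x - v = t • e' := hco x hxQ
                linear_combination (norm := module) h2
              rw [hu'eq, hxeq]
              have hcalc : (1 - t/τ) • v + (t/τ) • (v + τ • e')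
                  = v + ((t/τ)*τ) • e' := by module
              rw [hcalc, div_mul_cancel₀ t hττ]
      by_cases hp : ∃ u₂ ∈ V, ℓ v < ℓ u₂
      · have hall : ∀ u ∈ V, ℓ v ≤ ℓ u := by
          intro u hu
          by_contra hlt
          push_neg at hlt
          obtain ⟨u₂, hu₂V, hl₂⟩ := hp
          have hu₁Q : u ∈ Q := subset_convexHull ℝ _ (Finset.mem_coe.2 hu)
          have hu₂Q : u₂ ∈ Q := subset_convexHull ℝ _ (Finset.mem_coe.2 hu₂V)
          set t₁ := ℓ u - ℓ v with ht₁
          set t₂ := ℓ u₂ - ℓ v with ht₂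
          have ht₁neg : t₁ < 0 := by rw [ht₁]; linarith
          have ht₂pos : 0 < t₂ := by rw [ht₂]; linarith
          have hc₁ : u = v + t₁ • e := by
            have h2 : u - v = t₁ • e := hcoord u hu₁Q
            linear_combination (norm := module) h2
          have hc₂ : u₂ = v + t₂ • e := by
            have h2 : u₂ - v = t₂ • e := hcoord u₂ hu₂Q
            linear_combination (norm := module) h2
          have hvseg : v ∈ openSegment ℝ u u₂ := by
            refine ⟨t₂ / (t₂ - t₁), -t₁ / (t₂ - t₁), ?_, ?_, ?_, ?_⟩
            · apply div_pos ht₂pos; linarith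
            · apply div_pos (by linarith); linarith
            · have hden : t₂ - t₁ ≠ 0 := ne_of_gt (by linarith)
              have hnum : t₂ + -t₁ = t₂ - t₁ := by ring
              rw [← add_div, hnum, div_self hden]
            · rw [hc₁, hc₂]
              have hcalc : (t₂ / (t₂ - t₁)) • (v + t₁ • e)
                  + (-t₁ / (t₂ - t₁)) • (v + t₂ • e)
                  = (t₂ / (t₂ - t₁) + -t₁ / (t₂ - t₁)) • v
                    + ((t₂ / (t₂ - t₁)) * t₁ + (-t₁ / (t₂ - t₁)) * t₂) • e := by
                module
              rw [hcalc]
              have hden : t₂ - t₁ ≠ 0 := ne_of_gt (by linarith)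
              have e1 : t₂ / (t₂ - t₁) + -t₁ / (t₂ - t₁) = 1 := by
                have hnum : t₂ + -t₁ = t₂ - t₁ := by ring
                rw [← add_div, hnum, div_self hden]
              have e2 : (t₂ / (t₂ - t₁)) * t₁ + (-t₁ / (t₂ - t₁)) * t₂ = 0 := by
                field_simp
                ring
              rw [e1, e2, one_smul, zero_smul, add_zero]
          have hres := hv.2 hu₁Q hu₂Q rfl hvseg
          have : u = v := hres
          rw [ht₁, this] at ht₁neg
          simp at ht₁neg
        exact hinner e ℓ hcoord hall
      · push_neg at hp
        have hall : ∀ u ∈ V, (-ℓ) v ≤ (-ℓ) u := by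
          intro u hu
          simp only [ContinuousLinearMap.neg_apply, neg_le_neg_iff]
          exact hp u hu
        apply hinner (-e) (-ℓ) ?_ hall
        intro u hu
        have h2 := hcoord u hu
        show u - v = ((-ℓ) u - (-ℓ) v) • (-e)
        simp only [ContinuousLinearMap.neg_apply]
        linear_combination (norm := module) h2
    · -- dimension at least 2
      have h2 : 2 ≤ sdim Q := by omega
      obtain ⟨h, hstrict⟩ := exposer V hv
      have hker : ∃ kk : EVec n, kk ∈ (affineSpan ℝ Q).direction ∧ kk ≠ 0 ∧ h kk = 0 := by
        set D := (affineSpan ℝ Q).direction with hD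
        set f : D →ₗ[ℝ] ℝ := h.toLinearMap.comp D.subtype with hf
        by_cases hinj : Function.Injective f
        · exfalso
          have hle := LinearMap.finrank_le_finrank_of_injective hinj
          rw [Module.finrank_self] at hle
          have : sdim Q = Module.finrank ℝ D := rfl
          omega
        · have hkerne : LinearMap.ker f ≠ ⊥ := fun hb => hinj (LinearMap.ker_eq_bot.1 hb)
          obtain ⟨x, hx, hxne⟩ := Submodule.exists_mem_ne_zero_of_ne_bot hkerne
          refine ⟨(x : EVec n), x.2, ?_, ?_⟩
          · simpa using hxne
          · have := LinearMap.mem_ker.1 hx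
            simpa [hf] using this
      obtain ⟨kk, hkD, hkne, hhk⟩ := hker
      obtain ⟨i, hi⟩ : ∃ i, kk i ≠ 0 := by
        by_contra hc; push_neg at hc; exact hkne (funext hc)
      set gζ : EVec n →L[ℝ] ℝ := ContinuousLinearMap.proj i with hgζ
      have hgtk : gζ kk ≠ 0 := hi
      have hrec : ∀ (χ : EVec n →L[ℝ] ℝ) (z : EVec n),
          (∀ y ∈ Q, χ y ≤ χ v) → z ∈ Q → χ z = χ v → z ≠ v → χ kk ≠ 0 →
          ∃ u, u ≠ v ∧ u ∈ Q ∧ IsFace Q (convexHull ℝ ({v, u} : Set (EVec n))) := by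
        intro χ z hmax hzQ hzχ hzne hχk
        set F' := {x ∈ Q | χ x = χ v} with hF'
        have hvF' : v ∈ F' := ⟨hvQ, rfl⟩
        have hzF' : z ∈ F' := ⟨hzQ, hzχ⟩
        have hF'ne : F' ≠ Q := by
          intro hFQ
          apply hχk
          apply apply_eq_zero_of_const (c := χ v) ?_ hkD ⟨v, hvQ⟩
          intro y hy
          have : y ∈ F' := by rw [hFQ]; exact hy
          exact this.2
        have hexp : F' = {x ∈ Q | ∀ y ∈ Q, χ y ≤ χ x} :=
          (exposed_eq_level hvQ hmax rfl).symm
        have hMV : ∀ u ∈ V, χ u ≤ χ v := fun u hu =>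
          hmax u (subset_convexHull ℝ _ (Finset.mem_coe.2 hu))
        have hFA : F' = convexHull ℝ ((V.filter (fun u => χ u = χ v)) : Set (EVec n)) :=
          level_convexHull V χ (χ v) hMV
        have hsd : sdim F' < sdim Q := sdim_lt_of_proper χ hvF' hF' hF'ne
        have hext' : IsExtreme ℝ F' {v} :=
          extreme_mono hv (fun x hx => hx.1) hvF'
        have hd' : sdim (convexHull ℝ ((V.filter (fun u => χ u = χ v)) : Set (EVec n))) ≤ k := by
          rw [← hFA]; omega
        obtain ⟨u, hune, huF', hface⟩ := ih (V.filter (fun u => χ u = χ v)) v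
          (by rw [← hFA]; exact hext') hd' ⟨z, by rw [← hFA]; exact hzF', hzne⟩
        rw [← hFA] at huF' hface
        have hFexp : IsExposed ℝ Q F' := fun _ => ⟨χ, hexp⟩
        refine ⟨u, hune, (show F' ⊆ Q from fun x hx => hx.1) huF', ?_⟩
        have hFA' : IsExposed ℝ (convexHull ℝ (V : Set (EVec n))) F' := hFexp
        exact face_trans_exposed V hFA' hface
      by_cases hA : ∃ u ∈ V, gζ v < gζ u
      · obtain ⟨s, hs, u', hu'V, hgu', hmax, heqχ⟩ := constr V h gζ hstrict hA
        apply hrec (s • h + gζ) u' hmax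
          (subset_convexHull ℝ _ (Finset.mem_coe.2 hu'V)) heqχ
          (fun hc => by rw [hc] at hgu'; exact lt_irrefl _ hgu')
        show (s • h + gζ) kk ≠ 0
        have hval : (s • h + gζ) kk = gζ kk := by
          rw [ContinuousLinearMap.add_apply, ContinuousLinearMap.smul_apply, hhk,
            smul_zero, zero_add]
        rw [hval]
        exact hgtk
      · push_neg at hA
        have hmaxg : ∀ y ∈ Q, gζ y ≤ gζ v := fun y hy =>
          hull_le (fun u hu => hA u (Finset.mem_coe.1 hu)) hy
        by_cases hz : ∃ z ∈ Q, gζ z = gζ v ∧ z ≠ v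
        · obtain ⟨z, hzQ, hzg, hzne⟩ := hz
          exact hrec gζ z hmaxg hzQ hzg hzne hgtk
        · push_neg at hz
          have hexu : ∃ u ∈ V, (-gζ) v < (-gζ) u := by
            by_contra hcon
            push_neg at hcon
            obtain ⟨q, hq, hqne⟩ := hne
            apply hqne
            have hVv : (V : Set (EVec n)) ⊆ {v} := by
              intro u hu
              have h1 := hA u (Finset.mem_coe.1 hu)
              have h2 := hcon u (Finset.mem_coe.1 hu)
              simp only [ContinuousLinearMap.neg_apply, neg_le_neg_iff] at h2
              exact hz u (subset_convexHull ℝ _ hu) (le_antisymm h1 h2)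
            exact convexHull_min hVv (convex_singleton v) hq
          obtain ⟨s, hs, u', hu'V, hgu', hmax, heqχ⟩ := constr V h (-gζ) hstrict hexu
          apply hrec (s • h + (-gζ)) u' hmax
            (subset_convexHull ℝ _ (Finset.mem_coe.2 hu'V)) heqχ
            (fun hc => by rw [hc] at hgu'; exact lt_irrefl _ hgu')
          show (s • h + (-gζ)) kk ≠ 0
          have hval : (s • h + (-gζ)) kk = -(gζ kk) := by
            rw [ContinuousLinearMap.add_apply, ContinuousLinearMap.smul_apply, hhk,
              smul_zero, zero_add, ContinuousLinearMap.neg_apply]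
          rw [hval]
          exact neg_ne_zero.2 hgtk

end Aux3

section Aux4

variable {n : ℕ}

set_option maxHeartbeats 1600000 in
lemma sink_edge : ∀ (k : ℕ) (V : Finset (EVec n)) (v : EVec n) (g : EVec n →L[ℝ] ℝ),
    IsExtreme ℝ (convexHull ℝ (V : Set (EVec n))) {v} →
    sdim (convexHull ℝ (V : Set (EVec n))) ≤ k →
    (∃ x ∈ convexHull ℝ (V : Set (EVec n)), g v < g x) →
    ∃ u, u ≠ v ∧ u ∈ convexHull ℝ (V : Set (EVec n)) ∧
      IsFace (convexHull ℝ (V : Set (EVec n))) (convexHull ℝ ({v, u} : Set (EVec n))) ∧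
      g v < g u := by
  intro k
  induction k with
  | zero =>
    intro V v g hv hd hx
    exfalso
    obtain ⟨x, hxQ, hgx⟩ := hx
    have hsing := eq_singleton_of_sdim_eq_zero (Nat.le_zero.1 hd) (hv.1 rfl)
    rw [hsing] at hxQ
    rw [Set.mem_singleton_iff] at hxQ
    rw [hxQ] at hgx
    exact lt_irrefl _ hgx
  | succ k ih =>
    intro V v g hv hd hx
    set Q := convexHull ℝ (V : Set (EVec n)) with hQdef
    have hvQ : v ∈ Q := hv.1 rfl
    obtain ⟨h, hstrict⟩ := exposer V hv
    have himp : ∃ u ∈ V, g v < g u := by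
      by_contra hc
      push_neg at hc
      obtain ⟨x, hxQ, hgx⟩ := hx
      have := hull_le (fun u hu => hc u (Finset.mem_coe.1 hu)) hxQ
      linarith
    obtain ⟨s, hs, u', hu'V, hgu', hmax, heqχ⟩ := constr V h g hstrict himp
    set χ : EVec n →L[ℝ] ℝ := s • h + g with hχ
    have hu'Q : u' ∈ Q := subset_convexHull ℝ _ (Finset.mem_coe.2 hu'V)
    have hu'ne : u' ≠ v := fun hc => by rw [hc] at hgu'; exact lt_irrefl _ hgu'
    by_cases hconst : ∀ y ∈ Q, χ y = χ v
    · obtain ⟨u, hune, huQ, hface⟩ := edge_exists (sdim Q) V v hv le_rfl ⟨u', hu'Q, hu'ne⟩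
      refine ⟨u, hune, huQ, hface, ?_⟩
      have hχu := hconst u huQ
      have hhu : h u < h v := hstrict u huQ hune
      have hval : ∀ x, χ x = s * h x + g x := by intro x; simp [hχ]
      rw [hval, hval] at hχu
      nlinarith [mul_pos hs (sub_pos.2 hhu)]
    · push_neg at hconst
      obtain ⟨y₀, hy₀Q, hy₀ne⟩ := hconst
      set F' := {x ∈ Q | χ x = χ v} with hF'
      have hvF' : v ∈ F' := ⟨hvQ, rfl⟩
      have hu'F' : u' ∈ F' := ⟨hu'Q, heqχ⟩
      have hF'ne : F' ≠ Q := by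
        intro hFQ
        apply hy₀ne
        have : y₀ ∈ F' := by rw [hFQ]; exact hy₀Q
        exact this.2
      have hexp : F' = {x ∈ Q | ∀ y ∈ Q, χ y ≤ χ x} :=
        (exposed_eq_level hvQ hmax rfl).symm
      have hMV : ∀ u ∈ V, χ u ≤ χ v := fun u hu =>
        hmax u (subset_convexHull ℝ _ (Finset.mem_coe.2 hu))
      have hFA : F' = convexHull ℝ ((V.filter (fun u => χ u = χ v)) : Set (EVec n)) :=
        level_convexHull V χ (χ v) hMV
      have hsd : sdim F' < sdim Q := sdim_lt_of_proper χ hvF' hF' hF'ne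
      have hext' : IsExtreme ℝ F' {v} := extreme_mono hv (fun x hx => hx.1) hvF'
      have hd' : sdim (convexHull ℝ ((V.filter (fun u => χ u = χ v)) : Set (EVec n))) ≤ k := by
        rw [← hFA]; omega
      obtain ⟨u, hune, huF', hface, hgu⟩ := ih (V.filter (fun u => χ u = χ v)) v g
        (by rw [← hFA]; exact hext') hd' ⟨u', by rw [← hFA]; exact hu'F', hgu'⟩
      rw [← hFA] at huF' hface
      have hFexp : IsExposed ℝ Q F' := fun _ => ⟨χ, hexp⟩
      refine ⟨u, hune, (show F' ⊆ Q from fun x hx => hx.1) huF', ?_, hgu⟩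
      exact face_trans_exposed V hFexp hface

end Aux4

section Aux5

variable {n : ℕ}

set_option maxHeartbeats 1600000 in
lemma face_subset_face_of_neighbors {P F G : Set (EVec n)}
    (hP : IsPolytope P) {v : EVec n} (hvext : IsExtreme ℝ P {v})
    (hFface : IsFace P F) (hvF : v ∈ F)
    (hGface : IsFace P G) (hvG : v ∈ G)
    (hNG : ∀ u, Adj P v u → u ∈ F → u ∈ G) : F ⊆ G := by
  obtain ⟨V, hPV⟩ := hP
  rcases hGface with hGexp | hGe | hGP
  · obtain ⟨f, hf⟩ := hGexp ⟨v, hvG⟩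
    have hvG' : v ∈ {x ∈ P | ∀ y ∈ P, f y ≤ f x} := by rw [← hf]; exact hvG
    have hfmax : ∀ y ∈ P, f y ≤ f v := hvG'.2
    intro x hxF
    by_contra hxG
    have hxP : x ∈ P := face_subset hFface hxF
    have hgx : f x < f v := by
      have hno : ¬ ∀ y ∈ P, f y ≤ f x := fun hc => hxG (by rw [hf]; exact ⟨hxP, hc⟩)
      push_neg at hno
      obtain ⟨y, hyP, hy⟩ := hno
      exact lt_of_lt_of_le hy (hfmax y hyP)
    have hVF : ∃ V_F : Finset (EVec n), F = convexHull ℝ (V_F : Set (EVec n)) := by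
      rcases hFface with hFexp | hFe | hFP
      · obtain ⟨φ, hφ⟩ := hFexp ⟨v, hvF⟩
        have hvF' : v ∈ {x ∈ P | ∀ y ∈ P, φ y ≤ φ x} := by rw [← hφ]; exact hvF
        have hlev : F = {x ∈ P | φ x = φ v} := exposed_eq_level hvF'.1 hvF'.2 hφ
        refine ⟨V.filter (fun u => φ u = φ v), ?_⟩
        rw [hlev, hPV]
        exact level_convexHull V φ (φ v) (fun u hu => hvF'.2 u
          (by rw [hPV]; exact subset_convexHull ℝ _ (Finset.mem_coe.2 hu)))
      · exfalso; rw [hFe] at hvF; exact hvF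
      · exact ⟨V, by rw [hFP, hPV]⟩
    obtain ⟨V_F, hFV⟩ := hVF
    have hextF : IsExtreme ℝ F {v} := extreme_mono hvext (face_subset hFface) hvF
    obtain ⟨u, hune, huF, hfaceF, hgu⟩ := sink_edge (sdim F) V_F v (-f)
      (by rw [← hFV]; exact hextF) (by rw [← hFV])
      ⟨x, by rw [← hFV]; exact hxF,
        by simp only [ContinuousLinearMap.neg_apply]; exact neg_lt_neg hgx⟩
    rw [← hFV] at huF hfaceF
    have hfaceP : IsFace P (convexHull ℝ ({v, u} : Set (EVec n))) := by
      rcases hFface with hFexp | hFe | hFP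
      · rw [hPV]
        apply face_trans_exposed V ?_ hfaceF
        rw [← hPV]; exact hFexp
      · exfalso; rw [hFe] at hvF; exact hvF
      · rw [hFP] at hfaceF; exact hfaceF
    have hadj : Adj P v u := by
      refine ⟨hfaceP, ⟨v, subset_convexHull ℝ _ (Set.mem_insert _ _)⟩, sdim_pair hune⟩
    have huG : u ∈ G := hNG u hadj huF
    have hle : f v ≤ f u := by
      have huG' : u ∈ {x ∈ P | ∀ y ∈ P, f y ≤ f x} := by rw [← hf]; exact huG
      exact huG'.2 v (face_subset (Or.inl hGexp) hvG)
    simp only [ContinuousLinearMap.neg_apply, neg_lt_neg_iff] at hgu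
    linarith
  · exfalso; rw [hGe] at hvG; exact hvG
  · rw [hGP]; exact face_subset hFface

end Aux5

/-- `Ψ_{(v,w)}(S₁ ∩ S₂) = Ψ_{(v,w)}(S₁) ∩ Ψ_{(v,w)}(S₂)`. -/
theorem stmt2 {n d : ℕ} (P : Set (EVec n)) (hP : IsSimplePolytope P d)
    (v w : EVec n) (hv : IsVertex P v) (hw : IsVertex P w) (hvw : Adj P v w)
    (Ψ : Set (EVec n) → Set (EVec n))
    (hΨ : ∀ S : Set (EVec n), S ⊆ Neighbors P v \ {w} →
        Ψ S ⊆ Neighbors P w \ {v} ∧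
          ∃ F : Set (EVec n), Spans P v (insert w S) F ∧ Spans P w (insert v (Ψ S)) F)
    (S₁ S₂ : Set (EVec n)) (h₁ : S₁ ⊆ Neighbors P v \ {w})
    (h₂ : S₂ ⊆ Neighbors P v \ {w}) :
    Ψ (S₁ ∩ S₂) = Ψ S₁ ∩ Ψ S₂ := by
  obtain ⟨hΨA, FA, sAv, sAw⟩ := hΨ (S₁ ∩ S₂) (fun x hx => h₁ hx.1)
  obtain ⟨hΨ1, F1, s1v, s1w⟩ := hΨ S₁ h₁
  obtain ⟨hΨ2, F2, s2v, s2w⟩ := hΨ S₂ h₂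
  have hvext := vertex_extreme hv
  have hFAface : IsFace P FA := sAv.1.1
  have hF1face : IsFace P F1 := s1v.1.1
  have hF2face : IsFace P F2 := s2v.1.1
  have hvFA : v ∈ FA := sAv.2.1
  have hvF1 : v ∈ F1 := s1v.2.1
  have hvF2 : v ∈ F2 := s2v.2.1
  have key1 : FA ⊆ F1 := by
    apply face_subset_face_of_neighbors hP.1 hvext hFAface hvFA hF1face hvF1
    intro u hAdj huFA
    by_cases hins : u ∈ insert w (S₁ ∩ S₂)
    · rcases Set.mem_insert_iff.1 hins with rfl | hmem
      · exact s1v.2.2.1 (Set.mem_insert _ _)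
      · exact s1v.2.2.1 (Set.mem_insert_of_mem _ hmem.1)
    · exact absurd huFA (sAv.2.2.2 u ⟨hAdj, hins⟩)
  have key2 : FA ⊆ F2 := by
    apply face_subset_face_of_neighbors hP.1 hvext hFAface hvFA hF2face hvF2
    intro u hAdj huFA
    by_cases hins : u ∈ insert w (S₁ ∩ S₂)
    · rcases Set.mem_insert_iff.1 hins with rfl | hmem
      · exact s2v.2.2.1 (Set.mem_insert _ _)
      · exact s2v.2.2.1 (Set.mem_insert_of_mem _ hmem.2)
    · exact absurd huFA (sAv.2.2.2 u ⟨hAdj, hins⟩)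
  have hIface : IsFace P (F1 ∩ F2) := face_inter hF1face hF2face
  have key3 : F1 ∩ F2 ⊆ FA := by
    apply face_subset_face_of_neighbors hP.1 hvext hIface ⟨hvF1, hvF2⟩ hFAface hvFA
    intro u hAdj huI
    have hu1 : u ∈ insert w S₁ := by
      by_contra hnot; exact (s1v.2.2.2 u ⟨hAdj, hnot⟩) huI.1
    have hu2 : u ∈ insert w S₂ := by
      by_contra hnot; exact (s2v.2.2.2 u ⟨hAdj, hnot⟩) huI.2
    rcases Set.mem_insert_iff.1 hu1 with rfl | hm1
    · exact sAv.2.2.1 (Set.mem_insert _ _)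
    · rcases Set.mem_insert_iff.1 hu2 with heq | hm2
      · exact sAv.2.2.1 (Set.mem_insert_iff.2 (Or.inl heq))
      · exact sAv.2.2.1 (Set.mem_insert_of_mem _ ⟨hm1, hm2⟩)
  ext u
  constructor
  · intro hu
    have huN := hΨA hu
    have huFA : u ∈ FA := sAw.2.2.1 (Set.mem_insert_of_mem _ hu)
    have hua : u ∈ Ψ S₁ := by
      by_contra hnot
      have hins : u ∉ insert v (Ψ S₁) := by
        intro hins
        rcases Set.mem_insert_iff.1 hins with rfl | hmem
        · exact huN.2 rfl
        · exact hnot hmem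
      exact (s1w.2.2.2 u ⟨huN.1, hins⟩) (key1 huFA)
    have hub : u ∈ Ψ S₂ := by
      by_contra hnot
      have hins : u ∉ insert v (Ψ S₂) := by
        intro hins
        rcases Set.mem_insert_iff.1 hins with rfl | hmem
        · exact huN.2 rfl
        · exact hnot hmem
      exact (s2w.2.2.2 u ⟨huN.1, hins⟩) (key2 huFA)
    exact ⟨hua, hub⟩
  · rintro ⟨hu1, hu2⟩
    have huN := hΨ1 hu1
    have huF1 : u ∈ F1 := s1w.2.2.1 (Set.mem_insert_of_mem _ hu1)
    have huF2 : u ∈ F2 := s2w.2.2.1 (Set.mem_insert_of_mem _ hu2)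
    have huFA : u ∈ FA := key3 ⟨huF1, huF2⟩
    by_contra hnot
    have hins : u ∉ insert v (Ψ (S₁ ∩ S₂)) := by
      intro hins
      rcases Set.mem_insert_iff.1 hins with rfl | hmem
      · exact huN.2 rfl
      · exact hnot hmem
    exact (sAw.2.2.2 u ⟨huN.1, hins⟩) huFA
end

section
/- Let P be a simple polytope in ℝ^n and let c : ℝ^n → ℝ be a linear functional that takes pairwise distinct values on the vertices of P. Then the orientation of G(P) that directs each edge from its endpoint with larger c-value to its endpoint with smaller c-value is an AOF-orientation: it is acyclic and has a unique sink in (the subgraph induced by the vertex set of) every nonempty face of P. -/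
open scoped Classical

section stmt6aux
open Set


variable {n : ℕ}

lemma aux_hull_le {T : Finset (EVec n)} (l : EVec n →L[ℝ] ℝ) {M : ℝ}
    (hM : ∀ s ∈ T, l s ≤ M) {x : EVec n} (hx : x ∈ convexHull ℝ (T : Set (EVec n))) :
    l x ≤ M := by
  rw [Finset.convexHull_eq] at hx
  obtain ⟨w, hw0, hw1, rfl⟩ := hx
  rw [Finset.centerMass_eq_of_sum_1 _ _ hw1, map_sum]
  have key : ∀ y ∈ T, l (w y • id y) ≤ w y * M := by
    intro y hy
    rw [map_smul, smul_eq_mul, id]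
    exact mul_le_mul_of_nonneg_left (hM y hy) (hw0 y hy)
  calc (∑ y ∈ T, l (w y • id y)) ≤ ∑ y ∈ T, w y * M := Finset.sum_le_sum key
  _ = M := by rw [← Finset.sum_mul, hw1, one_mul]

lemma aux_argmax_hull {T : Finset (EVec n)} (l : EVec n →L[ℝ] ℝ) {M : ℝ}
    (hM : ∀ s ∈ T, l s ≤ M) {x : EVec n} (hx : x ∈ convexHull ℝ (T : Set (EVec n)))
    (hxM : l x = M) :
    x ∈ convexHull ℝ ((T.filter (fun s => l s = M)) : Set (EVec n)) := by
  rw [Finset.convexHull_eq] at hx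
  obtain ⟨w, hw0, hw1, rfl⟩ := hx
  have hl : l (T.centerMass w id) = ∑ z ∈ T, w z * l z := by
    rw [Finset.centerMass_eq_of_sum_1 _ _ hw1, map_sum]
    refine Finset.sum_congr rfl fun z _ => ?_
    rw [map_smul, smul_eq_mul, id]
  have hzero : ∑ z ∈ T, w z * (M - l z) = 0 := by
    rw [hl] at hxM
    have h2 : ∑ z ∈ T, (w z * M - w z * l z) = 0 := by
      rw [Finset.sum_sub_distrib, ← Finset.sum_mul, hw1, one_mul, hxM, sub_self]
    simpa [mul_sub] using h2
  have hsupp : ∀ z ∈ T, w z * (M - l z) = 0 :=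
    (Finset.sum_eq_zero_iff_of_nonneg
      (fun z hz => mul_nonneg (hw0 z hz) (sub_nonneg.2 (hM z hz)))).1 hzero
  rw [← Finset.centerMass_filter_ne_zero]
  refine Finset.centerMass_mem_convexHull _ (fun i hi => hw0 i (Finset.mem_filter.1 hi).1) ?_ ?_
  · rw [Finset.sum_filter_ne_zero, hw1]; exact one_pos
  · intro i hi
    obtain ⟨hiT, hiw⟩ := Finset.mem_filter.1 hi
    have hlM : l i = M := by
      have := hsupp i hiT
      rcases mul_eq_zero.1 this with h | h
      · exact absurd h hiw
      · linarith [sub_eq_zero.1 h]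
    exact Finset.mem_coe.2 (Finset.mem_filter.2 ⟨hiT, hlM⟩)

lemma aux_face_hull {T : Finset (EVec n)} (l : EVec n →L[ℝ] ℝ) {M : ℝ}
    (hM : ∀ s ∈ T, l s ≤ M) (hMmem : ∃ s ∈ T, l s = M) :
    {x ∈ convexHull ℝ (T : Set (EVec n)) | ∀ y ∈ convexHull ℝ (T : Set (EVec n)), l y ≤ l x}
      = convexHull ℝ ((T.filter (fun s => l s = M)) : Set (EVec n)) := by
  obtain ⟨s0, hs0T, hs0M⟩ := hMmem
  ext x
  constructor
  · rintro ⟨hxP, hmax⟩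
    have hxM : l x = M :=
      le_antisymm (aux_hull_le l hM hxP) (hs0M ▸ hmax s0 (subset_convexHull ℝ _ hs0T))
    exact aux_argmax_hull l hM hxP hxM
  · intro hx
    have hsub : ((T.filter (fun s => l s = M)) : Set (EVec n)) ⊆ (T : Set (EVec n)) := by
      exact_mod_cast Finset.filter_subset _ _
    have hxP : x ∈ convexHull ℝ (T : Set (EVec n)) := convexHull_mono hsub hx
    have hge : M ≤ l x := by
      have h3 : (-l) x ≤ -M := by
        refine aux_hull_le (-l) (fun s hs => ?_) hx
        have := (Finset.mem_filter.1 hs).2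
        simp [this]
      simpa using h3
    exact ⟨hxP, fun y hy => (aux_hull_le l hM hy).trans (hge.trans_eq rfl)⟩

lemma aux_extreme_mono {s t : Set (EVec n)} (hts : t ⊆ s) {x : EVec n}
    (hx : x ∈ Set.extremePoints ℝ s) (hxt : x ∈ t) : x ∈ Set.extremePoints ℝ t :=
  ⟨hxt, fun _ h1 _ h2 h3 => hx.2 (hts h1) (hts h2) h3⟩

lemma aux_exposing {T : Finset (EVec n)} {x : EVec n}
    (hx : x ∈ Set.extremePoints ℝ (convexHull ℝ (T : Set (EVec n)))) :
    ∃ h : EVec n →L[ℝ] ℝ, ∀ y ∈ convexHull ℝ (T : Set (EVec n)), y ≠ x → h y < h x := by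
  have hxT : x ∈ T := Finset.mem_coe.1 (extremePoints_convexHull_subset hx)
  by_cases hT : (T.erase x).Nonempty
  · set K := convexHull ℝ ((T.erase x : Finset (EVec n)) : Set (EVec n)) with hK
    have hxK : x ∉ K := by
      intro hmem
      have h1 : K ⊆ convexHull ℝ (T : Set (EVec n)) :=
        convexHull_mono (by exact_mod_cast Finset.erase_subset x T)
      have h3 := extremePoints_convexHull_subset (aux_extreme_mono h1 hx hmem)
      exact (Finset.mem_erase.1 (Finset.mem_coe.1 h3)).1 rfl
    obtain ⟨f, u, hfK, hfx⟩ := geometric_hahn_banach_closed_point (convex_convexHull ℝ _)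
      (((T.erase x).finite_toSet.isCompact_convexHull ℝ).isClosed) hxK
    refine ⟨f, fun y hy hne => ?_⟩
    have hTset : (T : Set (EVec n)) = insert x ((T.erase x : Finset (EVec n)) : Set (EVec n)) := by
      rw [← Finset.coe_insert, Finset.insert_erase hxT]
    rw [hTset, convexHull_insert (by exact_mod_cast hT)] at hy
    rw [mem_convexJoin] at hy
    obtain ⟨x', hx', z, hzK, a, b, ha, hb, hab, rfl⟩ := hy
    have hx'' : x' = x := hx'
    subst hx''
    have hfz : f z < u := hfK z hzK
    rcases eq_or_lt_of_le hb with hb0 | hbpos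
    · exfalso
      apply hne
      have ha1 : a = 1 := by linarith
      rw [← hb0, ha1, one_smul, zero_smul, add_zero]
    · have hcalc : f (a • x' + b • z) = a * f x' + b * f z := by
        rw [map_add, map_smul, map_smul, smul_eq_mul, smul_eq_mul]
      have h1 : f z < f x' := hfz.trans hfx
      have h2 : a * f x' + b * f z < a * f x' + b * f x' :=
        by linarith [mul_lt_mul_of_pos_left h1 hbpos]
      have h3 : a * f x' + b * f x' = f x' := by rw [← add_mul, hab, one_mul]
      rw [hcalc]
      linarith
  · have hsub : (T : Set (EVec n)) ⊆ {x} := by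
      intro y hy
      by_contra hne
      exact hT ⟨y, Finset.mem_erase.2 ⟨hne, Finset.mem_coe.1 hy⟩⟩
    refine ⟨0, fun y hy hne => absurd ?_ hne⟩
    have : convexHull ℝ (T : Set (EVec n)) ⊆ {x} := convexHull_min hsub (convex_singleton x)
    exact this hy


lemma aux_sdim_singleton (v : EVec n) : sdim ({v} : Set (EVec n)) = 0 := by
  rw [sdim, direction_affineSpan, vectorSpan_singleton]
  exact finrank_bot ℝ (EVec n)

lemma aux_isVertex_extreme {P : Set (EVec n)} {v : EVec n} (h : IsVertex P v) :
    v ∈ Set.extremePoints ℝ P := by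
  obtain ⟨hface, hne, _⟩ := h
  rcases hface with hexp | hempty | hPv
  · exact (isExtreme_singleton).1 hexp.isExtreme
  · exact absurd hempty (by simp)
  · refine ⟨hPv ▸ rfl, ?_⟩
    intro y hy z hz _
    rw [← hPv] at hy hz
    exact hy

lemma aux_extreme_isVertex {S : Finset (EVec n)} {P : Set (EVec n)}
    (hPS : P = convexHull ℝ (S : Set (EVec n))) {v : EVec n}
    (hv : v ∈ Set.extremePoints ℝ P) : IsVertex P v := by
  subst hPS
  obtain ⟨h, hh⟩ := aux_exposing hv
  refine ⟨Or.inl fun _ => ⟨h, ?_⟩, ⟨v, rfl⟩, aux_sdim_singleton v⟩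
  ext x
  simp only [Set.mem_singleton_iff, Set.mem_setOf_eq]
  constructor
  · rintro rfl
    refine ⟨hv.1, fun y hy => ?_⟩
    rcases eq_or_ne y x with rfl | hne
    · exact le_rfl
    · exact (hh y hy hne).le
  · rintro ⟨hxP, hmax⟩
    by_contra hne
    have h1 := hh x hxP hne
    have h2 := hmax v hv.1
    linarith

lemma aux_vertSet_eq {S : Finset (EVec n)} {P : Set (EVec n)}
    (hPS : P = convexHull ℝ (S : Set (EVec n))) :
    vertSet P = Set.extremePoints ℝ P :=
  Set.ext fun _ => ⟨fun h => aux_isVertex_extreme h, fun h => aux_extreme_isVertex hPS h⟩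

lemma aux_vertSet_finite {S : Finset (EVec n)} {P : Set (EVec n)}
    (hPS : P = convexHull ℝ (S : Set (EVec n))) : (vertSet P).Finite := by
  rw [aux_vertSet_eq hPS, hPS]
  exact Set.Finite.subset S.finite_toSet extremePoints_convexHull_subset

lemma aux_face_rep {P F : Set (EVec n)} (hF : IsFace P F) (hne : F.Nonempty) :
    ∃ l : EVec n →L[ℝ] ℝ, F = {x ∈ P | ∀ y ∈ P, l y ≤ l x} := by
  rcases hF with hexp | hempty | hFP
  · exact hexp hne
  · exact absurd hempty (Set.nonempty_iff_ne_empty.1 hne)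
  · exact ⟨0, by simp [hFP]⟩

lemma aux_face_struct {S : Finset (EVec n)} {P F : Set (EVec n)}
    (hPS : P = convexHull ℝ (S : Set (EVec n)))
    (hF : IsFace P F) (hne : F.Nonempty) :
    vertFace P F = Set.extremePoints ℝ F ∧ F = convexHull ℝ (vertFace P F) := by
  obtain ⟨l, hl⟩ := aux_face_rep hF hne
  have hSne : S.Nonempty := by
    rcases hne with ⟨x, hx⟩
    have hx' : x ∈ {x ∈ P | ∀ y ∈ P, l y ≤ l x} := by rw [← hl]; exact hx
    have hxP : x ∈ P := hx'.1
    rw [hPS] at hxP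
    by_contra hS
    rw [Finset.not_nonempty_iff_eq_empty] at hS
    simp [hS] at hxP
  set M := (S.image (fun s => l s)).max' (hSne.image _) with hM
  have hMle : ∀ s ∈ S, l s ≤ M := fun s hs => Finset.le_max' _ _ (Finset.mem_image_of_mem _ hs)
  have hMmem : ∃ s ∈ S, l s = M := by
    obtain ⟨s, hs, hval⟩ := Finset.mem_image.1 ((S.image (fun s => l s)).max'_mem (hSne.image _))
    exact ⟨s, hs, hval⟩
  have hFhull : F = convexHull ℝ ((S.filter (fun s => l s = M)) : Set (EVec n)) := by
    rw [hl, hPS]; exact aux_face_hull l hMle hMmem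
  have hexp : IsExposed ℝ P F := fun _ => ⟨l, hl⟩
  have hFP : F ⊆ P := hexp.subset
  have hEPF : Set.extremePoints ℝ F ⊆ Set.extremePoints ℝ P :=
    hexp.isExtreme.extremePoints_subset_extremePoints
  have h1 : vertFace P F = Set.extremePoints ℝ F := by
    ext x
    constructor
    · rintro ⟨hxV, hxF⟩
      exact aux_extreme_mono hFP (aux_isVertex_extreme hxV) hxF
    · intro hx
      exact ⟨aux_extreme_isVertex hPS (hEPF hx), hx.1⟩
  have hEfin : (Set.extremePoints ℝ F).Finite := by
    refine Set.Finite.subset (S.filter (fun s => l s = M)).finite_toSet ?_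
    intro x hx
    exact extremePoints_convexHull_subset (hFhull ▸ hx)
  have h2 : F = convexHull ℝ (Set.extremePoints ℝ F) := by
    have hcomp : IsCompact F := by
      rw [hFhull]; exact (Finset.finite_toSet _).isCompact_convexHull ℝ
    have hconv : Convex ℝ F := by rw [hFhull]; exact convex_convexHull ℝ _
    have hcl := closure_convexHull_extremePoints hcomp hconv
    conv_lhs => rw [← hcl]
    exact IsClosed.closure_eq ((hEfin.isCompact_convexHull ℝ).isClosed)
  exact ⟨h1, by rw [h1]; exact h2⟩

lemma aux_vertFace_nonempty {S : Finset (EVec n)} {P F : Set (EVec n)}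
    (hPS : P = convexHull ℝ (S : Set (EVec n)))
    (hF : IsFace P F) (hne : F.Nonempty) : (vertFace P F).Nonempty := by
  obtain ⟨-, h2⟩ := aux_face_struct hPS hF hne
  rcases hne with ⟨x, hx⟩
  rw [h2] at hx
  by_contra h
  rw [Set.not_nonempty_iff_eq_empty] at h
  rw [h, convexHull_empty] at hx
  exact hx

lemma aux_endpoint_extreme {v w : EVec n} (hvw : v ≠ w) :
    v ∈ Set.extremePoints ℝ (convexHull ℝ ({v, w} : Set (EVec n))) := by
  obtain ⟨ψ, hψ⟩ := geometric_hahn_banach_point_point hvw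
  have hseg : ∀ p ∈ convexHull ℝ ({v, w} : Set (EVec n)), ψ v ≤ ψ p ∧ (ψ p = ψ v → p = v) := by
    intro p hp
    rw [convexHull_pair] at hp
    obtain ⟨a, b, ha, hb, hab, rfl⟩ := hp
    have hval : ψ (a • v + b • w) = a * ψ v + b * ψ w := by
      rw [map_add, map_smul, map_smul]; rfl
    have e3 : a * ψ v + b * ψ v = ψ v := by rw [← add_mul, hab, one_mul]
    constructor
    · rw [hval]
      have : b * ψ v ≤ b * ψ w := mul_le_mul_of_nonneg_left hψ.le hb
      linarith
    · intro he
      rw [hval] at he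
      have hb0 : b = 0 := by
        by_contra hb0
        have hbpos : 0 < b := lt_of_le_of_ne hb (Ne.symm hb0)
        have : b * ψ v < b * ψ w := mul_lt_mul_of_pos_left hψ hbpos
        linarith
      have ha1 : a = 1 := by linarith
      rw [hb0, ha1, one_smul, zero_smul, add_zero]
  refine ⟨subset_convexHull ℝ _ (Set.mem_insert v _), ?_⟩
  intro y hy z hz hvyz
  obtain ⟨a, b, ha, hb, hab, hsum⟩ := hvyz
  have hy' := hseg y hy
  have hz' := hseg z hz
  have hval : a * ψ y + b * ψ z = ψ v := by
    rw [← hsum, map_add, map_smul, map_smul]; rfl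
  have e3 : a * ψ v + b * ψ v = ψ v := by rw [← add_mul, hab, one_mul]
  have e1 : a * ψ v ≤ a * ψ y := mul_le_mul_of_nonneg_left hy'.1 ha.le
  have e2 : b * ψ v ≤ b * ψ z := mul_le_mul_of_nonneg_left hz'.1 hb.le
  have hψy : ψ y = ψ v := by
    by_contra hne
    have hlt : ψ v < ψ y := lt_of_le_of_ne hy'.1 (Ne.symm hne)
    have := mul_lt_mul_of_pos_left hlt ha
    linarith
  have hψz : ψ z = ψ v := by
    by_contra hne
    have hlt : ψ v < ψ z := lt_of_le_of_ne hz'.1 (Ne.symm hne)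
    have := mul_lt_mul_of_pos_left hlt hb
    linarith
  exact hy'.2 hψy

lemma aux_adj_symm {P : Set (EVec n)} {v w : EVec n} (h : Adj P v w) : Adj P w v := by
  rw [Adj, Set.pair_comm w v]; exact h

lemma aux_adj_ne {P : Set (EVec n)} {v w : EVec n} (h : Adj P v w) : v ≠ w := by
  rintro rfl
  have h1 := h.2.2
  rw [Set.pair_eq_singleton, convexHull_singleton] at h1
  have h0 := aux_sdim_singleton (n := n) v
  rw [h1] at h0
  exact absurd h0 one_ne_zero

lemma aux_adj_vertices {S : Finset (EVec n)} {P : Set (EVec n)}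
    (hPS : P = convexHull ℝ (S : Set (EVec n))) {v w : EVec n} (h : Adj P v w) :
    IsVertex P v ∧ IsVertex P w := by
  have hvw := aux_adj_ne h
  have hEne : (convexHull ℝ ({v, w} : Set (EVec n))).Nonempty :=
    ⟨v, subset_convexHull ℝ _ (Set.mem_insert _ _)⟩
  obtain ⟨h1, -⟩ := aux_face_struct hPS h.1 hEne
  have hvE : v ∈ Set.extremePoints ℝ (convexHull ℝ ({v, w} : Set (EVec n))) :=
    aux_endpoint_extreme hvw
  have hwE : w ∈ Set.extremePoints ℝ (convexHull ℝ ({v, w} : Set (EVec n))) := by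
    rw [Set.pair_comm]; exact aux_endpoint_extreme hvw.symm
  have hv' : v ∈ vertFace P (convexHull ℝ ({v, w} : Set (EVec n))) := by rw [h1]; exact hvE
  have hw' : w ∈ vertFace P (convexHull ℝ ({v, w} : Set (EVec n))) := by rw [h1]; exact hwE
  exact ⟨hv'.1, hw'.1⟩

lemma aux_P_hull_vert {S : Finset (EVec n)} {P : Set (EVec n)}
    (hPS : P = convexHull ℝ (S : Set (EVec n))) (hPne : P.Nonempty) :
    P = convexHull ℝ (vertSet P) := by
  obtain ⟨-, h2⟩ := aux_face_struct hPS (Or.inr (Or.inr rfl)) hPne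
  have hv : vertFace P P = vertSet P := by
    apply Set.inter_eq_self_of_subset_left
    rw [aux_vertSet_eq hPS]
    exact extremePoints_subset
  rw [← hv]
  exact h2
set_option maxHeartbeats 2000000 in
lemma aux_improving_edge {S : Finset (EVec n)} {P F : Set (EVec n)}
    (hPS : P = convexHull ℝ (S : Set (EVec n)))
    (hF : IsFace P F) (hne : F.Nonempty) (c : EVec n →ₗ[ℝ] ℝ)
    {w v : EVec n} (hw : w ∈ vertFace P F) (hv : v ∈ vertFace P F) (hcv : c v < c w) :
    ∃ u ∈ vertFace P F, Adj P w u ∧ c u < c w := by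
  classical
  -- basic setup
  have hVfin : (vertSet P).Finite := aux_vertSet_finite hPS
  set VS : Finset (EVec n) := hVfin.toFinset with hVSdef
  have hVS : (VS : Set (EVec n)) = vertSet P := hVfin.coe_toFinset
  obtain ⟨hvf_eq, hFhull0⟩ := aux_face_struct hPS hF hne
  have hVFfin : (vertFace P F).Finite := hVfin.subset Set.inter_subset_left
  set VF : Finset (EVec n) := hVFfin.toFinset with hVFdef
  have hVFcoe : (VF : Set (EVec n)) = vertFace P F := hVFfin.coe_toFinset
  have hFhull : F = convexHull ℝ (VF : Set (EVec n)) := by rw [hVFcoe]; exact hFhull0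
  have hFconv : Convex ℝ F := by rw [hFhull]; exact convex_convexHull ℝ _
  have hFcomp : IsCompact F := by rw [hFhull]; exact (Finset.finite_toSet _).isCompact_convexHull ℝ
  obtain ⟨e, hFe⟩ := aux_face_rep hF hne
  have hFprop : ∀ z ∈ F, z ∈ P ∧ ∀ y ∈ P, e y ≤ e z := by
    intro z hz
    have : z ∈ {x ∈ P | ∀ y ∈ P, e y ≤ e x} := by rw [← hFe]; exact hz
    exact ⟨this.1, this.2⟩
  have hFP : F ⊆ P := fun z hz => (hFprop z hz).1
  have hwF : w ∈ F := hw.2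
  have hwP : w ∈ P := hFP hwF
  have hPne : P.Nonempty := ⟨w, hwP⟩
  have he_max : ∀ y ∈ P, e y ≤ e w := (hFprop w hwF).2
  have he_mem : ∀ y ∈ P, e y = e w → y ∈ F := by
    intro y hyP hye
    rw [hFe]
    exact ⟨hyP, fun z hz => (he_max z hz).trans hye.ge⟩
  -- vertex-exposing functional for w
  have hwVert : IsVertex P w := hw.1
  obtain ⟨f, hfw⟩ := aux_face_rep hwVert.1 ⟨w, rfl⟩
  have hfmax : ∀ y ∈ P, f y ≤ f w := by
    have : w ∈ {x ∈ P | ∀ y ∈ P, f y ≤ f x} := by rw [← hfw]; exact rfl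
    exact this.2
  have hfstrict : ∀ y ∈ P, y ≠ w → f y < f w := by
    intro y hyP hyw
    rcases lt_or_eq_of_le (hfmax y hyP) with h | h
    · exact h
    · exfalso
      apply hyw
      have : y ∈ {x ∈ P | ∀ z ∈ P, f z ≤ f x} := ⟨hyP, fun z hz => (hfmax z hz).trans h.ge⟩
      rw [← hfw] at this
      exact this
  set g : EVec n →L[ℝ] ℝ := -f with hgdef
  have hg : ∀ y ∈ P, y ≠ w → g w < g y := by
    intro y hyP hyw
    have := hfstrict y hyP hyw
    simp only [hgdef, ContinuousLinearMap.neg_apply]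
    linarith
  -- the truncation level t
  set VF' : Finset (EVec n) := VF.erase w with hVF'def
  have hVF'sub : ∀ u ∈ VF', u ∈ vertFace P F ∧ u ≠ w := by
    intro u hu
    obtain ⟨hne', huVF⟩ := Finset.mem_erase.1 hu
    exact ⟨by rw [← hVFcoe]; exact_mod_cast huVF, hne'⟩
  have hvw : v ≠ w := by rintro rfl; exact lt_irrefl _ hcv
  have hvVF' : v ∈ VF' := Finset.mem_erase.2 ⟨hvw, by rw [← Finset.mem_coe, hVFcoe]; exact hv⟩
  have hVF'ne : VF'.Nonempty := ⟨v, hvVF'⟩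
  have hgVF' : ∀ u ∈ VF', g w < g u := by
    intro u hu
    obtain ⟨huVF, hune⟩ := hVF'sub u hu
    exact hg u (hFP huVF.2) hune
  set δ : ℝ := (VF'.image (fun y => g y)).min' (hVF'ne.image _) with hδdef
  have hδ : g w < δ := by
    obtain ⟨y0, hy0, hval⟩ := Finset.mem_image.1 ((VF'.image (fun y => g y)).min'_mem (hVF'ne.image _))
    rw [hδdef, ← hval]
    exact hgVF' y0 hy0
  set t : ℝ := (g w + δ)/2 with htdef
  have hwt : g w < t := by rw [htdef]; linarith
  have hgt : ∀ u ∈ VF', t < g u := by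
    intro u hu
    have h1 : δ ≤ g u := Finset.min'_le _ _ (Finset.mem_image_of_mem _ hu)
    rw [htdef]; linarith
  -- the points q u
  set μ : EVec n → ℝ := fun u => (t - g w)/(g u - g w) with hμdef
  set q : EVec n → EVec n := fun u => w + μ u • (u - w) with hqdef
  have hμpos : ∀ u ∈ VF', 0 < μ u := by
    intro u hu
    exact div_pos (by linarith) (by have := hgt u hu; linarith)
  have hμlt1 : ∀ u ∈ VF', μ u < 1 := by
    intro u hu
    rw [hμdef]
    have h1 := hgt u hu
    rw [div_lt_one (by linarith)]
    linarith
  have hql : ∀ (l : EVec n →L[ℝ] ℝ) (u : EVec n), l (q u) = l w + μ u * (l u - l w) := by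
    intro l u
    simp only [hqdef, map_add, map_smul, map_sub, smul_eq_mul]
  have hqc : ∀ u : EVec n, c (q u) = c w + μ u * (c u - c w) := by
    intro u
    simp only [hqdef, map_add, map_smul, map_sub, smul_eq_mul]
  have hgq : ∀ u ∈ VF', g (q u) = t := by
    intro u hu
    rw [hql g u, hμdef]
    have h1 : g u - g w ≠ 0 := by have := hgt u hu; intro h; rw [sub_eq_zero] at h; linarith [hwt]
    field_simp
    ring
  have hqF : ∀ u ∈ VF', q u ∈ F := by
    intro u hu
    have huF : u ∈ F := (hVF'sub u hu).1.2
    have hid : q u = (1 - μ u) • w + μ u • u := by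
      simp only [hqdef, smul_sub, sub_smul, one_smul]
      abel
    rw [hid]
    exact hFconv hwF huF (by linarith [hμlt1 u hu]) (hμpos u hu).le (by ring)
  -- the slice R and its hull description
  set R : Set (EVec n) := F ∩ {x | g x = t} with hRdef
  set Q : Finset (EVec n) := VF'.image q with hQdef
  have hQR : (Q : Set (EVec n)) ⊆ R := by
    intro x hx
    obtain ⟨u, hu, rfl⟩ := Finset.mem_image.1 (Finset.mem_coe.1 hx)
    exact ⟨hqF u hu, hgq u hu⟩
  have hRconv : Convex ℝ R := by
    apply hFconv.inter
    have : {x : EVec n | g x = t} = g ⁻¹' {t} := rfl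
    rw [this]
    exact (convex_singleton t).linear_preimage (g : EVec n →ₗ[ℝ] ℝ)
  have hRQ : R ⊆ convexHull ℝ (Q : Set (EVec n)) := by
    rintro x ⟨hxF, hxg⟩
    have hxg' : g x = t := hxg
    have hxF' : x ∈ convexHull ℝ (VF : Set (EVec n)) := by rw [← hFhull]; exact hxF
    rw [Finset.convexHull_eq] at hxF'
    obtain ⟨lam, hl0, hl1, hx⟩ := hxF'
    have hxsum : ∑ y ∈ VF, lam y • y = x := by
      rw [← Finset.centerMass_eq_of_sum_1 _ _ hl1]; exact hx
    have hwVF : w ∈ VF := by rw [← Finset.mem_coe, hVFcoe]; exact hw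
    have hsplit : lam w • w + ∑ y ∈ VF', lam y • y = ∑ y ∈ VF, lam y • y := by
      rw [hVF'def]
      exact Finset.add_sum_erase VF (fun y => lam y • y) hwVF
    have hsum' : lam w + ∑ y ∈ VF', lam y = 1 := by
      rw [hVF'def, Finset.add_sum_erase VF lam hwVF]
      exact hl1
    set α : EVec n → ℝ := fun y => lam y / μ y with hαdef
    have hμne : ∀ y ∈ VF', μ y ≠ 0 := fun y hy => (hμpos y hy).ne'
    have hαμ : ∀ y ∈ VF', α y * μ y = lam y := fun y hy => div_mul_cancel₀ _ (hμne y hy)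
    have hkey : ∑ y ∈ VF', α y • q y = (∑ y ∈ VF', α y) • w + (x - w) := by
      have h1 : ∀ y ∈ VF', α y • q y = α y • w + (lam y • y - lam y • w) := by
        intro y hy
        have : α y • q y = α y • w + (α y * μ y) • (y - w) := by
          simp only [hqdef, smul_add, smul_smul]
        rw [this, hαμ y hy, smul_sub]
      rw [Finset.sum_congr rfl h1, Finset.sum_add_distrib, Finset.sum_sub_distrib,
        ← Finset.sum_smul, ← Finset.sum_smul]
      have h2 : ∑ y ∈ VF', lam y • y = x - lam w • w := by
        rw [← hxsum, ← hsplit]; abel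
      rw [h2]
      have h3 : (∑ y ∈ VF', lam y) = 1 - lam w := by linarith [hsum']
      rw [h3, sub_smul, one_smul]
      abel
    have hsα : ∑ y ∈ VF', α y = 1 := by
      have hgkey := congrArg g hkey
      rw [map_sum] at hgkey
      have hL : ∀ y ∈ VF', g (α y • q y) = α y * t := by
        intro y hy
        rw [map_smul, smul_eq_mul, hgq y hy]
      rw [Finset.sum_congr rfl hL, ← Finset.sum_mul] at hgkey
      have hR' : g ((∑ y ∈ VF', α y) • w + (x - w)) = (∑ y ∈ VF', α y) * g w + (t - g w) := by
        rw [map_add, map_smul, map_sub, smul_eq_mul, hxg']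
      rw [hR'] at hgkey
      have hne2 : t - g w ≠ 0 := by intro h; rw [sub_eq_zero] at h; linarith [hwt]
      exact mul_right_cancel₀ hne2 (by rw [one_mul]; linear_combination hgkey)
    have hx2 : x = VF'.centerMass α q := by
      rw [Finset.centerMass_eq_of_sum_1 _ _ hsα, hkey, hsα, one_smul]
      abel
    rw [hx2]
    refine Finset.centerMass_mem_convexHull _ ?_ ?_ ?_
    · intro y hy
      exact div_nonneg (hl0 y (Finset.mem_of_mem_erase hy)) (hμpos y hy).le
    · rw [hsα]; exact one_pos
    · intro y hy
      exact Finset.mem_coe.2 (Finset.mem_image_of_mem q hy)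
  have hRhull : R = convexHull ℝ (Q : Set (EVec n)) :=
    Set.Subset.antisymm hRQ (convexHull_min hQR hRconv)
  -- injectivity of q on VF'
  have hqinj : ∀ y ∈ VF', ∀ u ∈ VF', q y = q u → y = u := by
    intro y hy u hu heq
    by_contra hyu
    have h1 : μ y • (y - w) = μ u • (u - w) := by
      have := heq
      simp only [hqdef] at this
      exact add_left_cancel this
    set r : ℝ := μ u / μ y with hrdef
    have hμy := hμpos y hy
    have hμu := hμpos u hu
    have hrpos : 0 < r := div_pos hμu hμy
    have h2 : y - w = r • (u - w) := by
      have := congrArg (fun z => (μ y)⁻¹ • z) h1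
      simp only [smul_smul] at this
      rw [inv_mul_cancel₀ hμy.ne', one_smul] at this
      rw [this, hrdef, div_eq_inv_mul]
    have hyP : y ∈ P := hFP (hVF'sub y hy).1.2
    have huP : u ∈ P := hFP (hVF'sub u hu).1.2
    have hyVert : y ∈ Set.extremePoints ℝ P := aux_isVertex_extreme (hVF'sub y hy).1.1
    have huVert : u ∈ Set.extremePoints ℝ P := aux_isVertex_extreme (hVF'sub u hu).1.1
    rcases lt_trichotomy r 1 with hr1 | hr1 | hr1
    · -- y strictly inside [w, u]
      have hyseg : y ∈ openSegment ℝ w u := by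
        refine ⟨1 - r, r, by linarith, hrpos, by ring, ?_⟩
        have : y = w + r • (u - w) := by rw [← h2]; abel
        rw [this, smul_sub, sub_smul, one_smul]
        abel
      have := hyVert.2 hwP huP hyseg
      exact (hVF'sub y hy).2 this.symm
    · -- r = 1 gives y = u
      apply hyu
      have h4 : y - w = u - w := by rw [h2, hr1, one_smul]
      exact sub_left_inj.1 h4
    · -- u strictly inside [w, y]
      have h3 : u - w = r⁻¹ • (y - w) := by
        rw [h2, smul_smul, inv_mul_cancel₀ hrpos.ne', one_smul]
      have hrinv : 0 < r⁻¹ := inv_pos.2 hrpos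
      have hrinv1 : r⁻¹ < 1 := by rw [inv_lt_one_iff₀]; right; exact hr1
      have huseg : u ∈ openSegment ℝ w y := by
        refine ⟨1 - r⁻¹, r⁻¹, by linarith, hrinv, by ring, ?_⟩
        have : u = w + r⁻¹ • (y - w) := by rw [← h3]; abel
        rw [this, smul_sub, sub_smul, one_smul]
        abel
      have := huVert.2 hwP hyP huseg
      exact (hVF'sub u hu).2 this.symm
  -- minimize c over R, get an extreme point of R in the argmin set
  have hRcomp : IsCompact R := hFcomp.inter_right (isClosed_eq g.continuous continuous_const)
  have hRne : R.Nonempty := ⟨q v, hqF v hvVF', hgq v hvVF'⟩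
  have hccont : Continuous c := c.continuous_of_finiteDimensional
  obtain ⟨x0, hx0R, hx0min'⟩ := hRcomp.exists_isMinOn hRne hccont.continuousOn
  have hx0min : ∀ y ∈ R, c x0 ≤ c y := fun y hy => hx0min' hy
  set A : Set (EVec n) := {x ∈ R | c x = c x0} with hAdef
  have hAne : A.Nonempty := ⟨x0, hx0R, rfl⟩
  have hAcomp : IsCompact A := by
    have : A = R ∩ c ⁻¹' {c x0} := rfl
    rw [this]
    exact hRcomp.inter_right (isClosed_eq hccont continuous_const)
  obtain ⟨x, hxA⟩ := hAcomp.extremePoints_nonempty hAne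
  have hAextreme : IsExtreme ℝ R A := by
    refine ⟨fun z hz => hz.1, ?_⟩
    intro x1 hx1 x2 hx2 z hzA hzseg
    obtain ⟨a, b, ha, hb, hab, hsum⟩ := hzseg
    have hcz : a * c x1 + b * c x2 = c x0 := by
      rw [← hzA.2, ← hsum, map_add, map_smul, map_smul]; rfl
    have hc1 : c x0 ≤ c x1 := hx0min x1 hx1
    have hc2 : c x0 ≤ c x2 := hx0min x2 hx2
    have he1 : c x1 = c x0 := by
      by_contra hne'
      have : c x0 < c x1 := lt_of_le_of_ne hc1 (Ne.symm hne')
      nlinarith [mul_lt_mul_of_pos_left this ha, mul_le_mul_of_nonneg_left hc2 hb.le,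
        (by rw [← add_mul, hab, one_mul] : a * c x0 + b * c x0 = c x0)]
    have he2 : c x2 = c x0 := by
      by_contra hne'
      have : c x0 < c x2 := lt_of_le_of_ne hc2 (Ne.symm hne')
      nlinarith [mul_lt_mul_of_pos_left this hb, mul_le_mul_of_nonneg_left hc1 ha.le,
        (by rw [← add_mul, hab, one_mul] : a * c x0 + b * c x0 = c x0)]
    exact ⟨hx1, he1⟩
  have hxR : x ∈ Set.extremePoints ℝ R := hAextreme.extremePoints_subset_extremePoints hxA
  have hxRmem : x ∈ R := hxR.1
  have hxQ : x ∈ Q := by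
    have : x ∈ Set.extremePoints ℝ (convexHull ℝ (Q : Set (EVec n))) := by
      rw [← hRhull]; exact hxR
    exact Finset.mem_coe.1 (extremePoints_convexHull_subset this)
  obtain ⟨u, huVF', hqu⟩ := Finset.mem_image.1 hxQ
  have huvf : u ∈ vertFace P F := (hVF'sub u huVF').1
  have hune : u ≠ w := (hVF'sub u huVF').2
  have hcx : c x = c x0 := hxA.1.2
  have hcqv : c (q v) < c w := by
    rw [hqc v]
    nlinarith [hμpos v hvVF', hμlt1 v hvVF']
  have hcu : c u < c w := by
    have h1 : c x ≤ c (q v) := hcx ▸ hx0min (q v) ⟨hqF v hvVF', hgq v hvVF'⟩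
    have h2 : c (q u) < c w := by rw [hqu]; exact h1.trans_lt hcqv
    rw [hqc u] at h2
    by_contra hge
    push_neg at hge
    nlinarith [mul_nonneg (hμpos u huVF').le (sub_nonneg.2 hge)]
  -- exposing functional for x in R
  have hxRext' : x ∈ Set.extremePoints ℝ (convexHull ℝ (Q : Set (EVec n))) := by
    rw [← hRhull]; exact hxR
  obtain ⟨h, hh⟩ := aux_exposing hxRext'
  have hhR : ∀ y ∈ R, y ≠ x → h y < h x := by
    intro y hy hyx
    exact hh y (by rw [← hRhull]; exact hy) hyx
  -- the functional Φ' with Φ' w = Φ' x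
  have hgwt : g w - t ≠ 0 := sub_ne_zero.2 hwt.ne
  set sc : ℝ := (h x - h w)/(g w - t) with hscdef
  set Φ' : EVec n →L[ℝ] ℝ := h + sc • g with hΦ'def
  have hΦ'app : ∀ z, Φ' z = h z + sc * g z := by
    intro z
    simp [hΦ'def]
  have hgx : g x = t := hxRmem.2
  have hΦ'wx : Φ' w = Φ' x := by
    rw [hΦ'app, hΦ'app, hgx]
    have : sc * (g w - t) = h x - h w := div_mul_cancel₀ _ hgwt
    nlinarith [this]
  have hΦ'R : ∀ y ∈ R, y ≠ x → Φ' y < Φ' x := by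
    intro y hy hyx
    rw [hΦ'app, hΦ'app, hgx, hy.2]
    have := hhR y hy hyx
    linarith
  have hΦ'strict : ∀ y ∈ VF', y ≠ u → Φ' y < Φ' w := by
    intro y hy hyu
    have hqyR : q y ∈ R := ⟨hqF y hy, hgq y hy⟩
    have hqyx : q y ≠ x := by
      intro heq
      exact hyu (hqinj y hy u huVF' (heq.trans hqu.symm))
    have h1 : Φ' (q y) < Φ' x := hΦ'R (q y) hqyR hqyx
    rw [← hΦ'wx] at h1
    rw [hql Φ' y] at h1
    by_contra hge
    push_neg at hge
    nlinarith [mul_nonneg (hμpos y hy).le (sub_nonneg.2 hge)]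
  have hΦ'u : Φ' u = Φ' w := by
    have h1 : Φ' (q u) = Φ' w := by rw [hqu, ← hΦ'wx]
    rw [hql Φ' u] at h1
    have h2 : μ u * (Φ' u - Φ' w) = 0 := by linarith
    rcases mul_eq_zero.1 h2 with h3 | h3
    · exact absurd h3 (hμpos u huVF').ne'
    · linarith [sub_eq_zero.1 h3]
  -- big constant to dominate vertices outside F
  set Vout : Finset (EVec n) := VS.filter (fun y => y ∉ F) with hVoutdef
  have hVoutP : ∀ y ∈ Vout, y ∈ P ∧ e y < e w := by
    intro y hy
    obtain ⟨hyVS, hyF⟩ := Finset.mem_filter.1 hy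
    have hyVert : IsVertex P y := by
      have hmem : y ∈ vertSet P := by rw [← hVS]; exact_mod_cast hyVS
      exact hmem
    have hyP : y ∈ P := (aux_isVertex_extreme hyVert).1
    refine ⟨hyP, ?_⟩
    rcases lt_or_eq_of_le (he_max y hyP) with h' | h'
    · exact h'
    · exact absurd (he_mem y hyP h') hyF
  set K : ℝ := if hVo : Vout.Nonempty then
      1 + max 0 ((Vout.image (fun z => (Φ' z - Φ' w)/(e w - e z))).max' (hVo.image _)) else 1
    with hKdef
  have hK : ∀ y ∈ Vout, Φ' y - Φ' w < K * (e w - e y) := by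
    intro y hy
    have hVo : Vout.Nonempty := ⟨y, hy⟩
    have hepos : 0 < e w - e y := by linarith [(hVoutP y hy).2]
    have hle : (Φ' y - Φ' w)/(e w - e y) ≤
        (Vout.image (fun z => (Φ' z - Φ' w)/(e w - e z))).max' (hVo.image _) := by
      apply Finset.le_max'
      exact Finset.mem_image_of_mem _ hy
    have hKval : (Φ' y - Φ' w)/(e w - e y) < K := by
      rw [hKdef, dif_pos hVo]
      have := le_max_right (0:ℝ) ((Vout.image (fun z => (Φ' z - Φ' w)/(e w - e z))).max' (hVo.image _))
      linarith
    calc Φ' y - Φ' w = ((Φ' y - Φ' w)/(e w - e y)) * (e w - e y) := by field_simp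
    _ < K * (e w - e y) := by exact mul_lt_mul_of_pos_right hKval hepos
  set Φ : EVec n →L[ℝ] ℝ := K • e + Φ' with hΦdef
  have hΦapp : ∀ z, Φ z = K * e z + Φ' z := by
    intro z
    simp [hΦdef]
  -- max analysis over all vertices
  have hwVS : w ∈ VS := by rw [← Finset.mem_coe, hVS]; exact hw.1
  have huVS : u ∈ VS := by rw [← Finset.mem_coe, hVS]; exact huvf.1
  have heu : e u = e w := le_antisymm (he_max u (hFP huvf.2)) ((hFprop u huvf.2).2 w hwP)
  have hΦu : Φ u = Φ w := by rw [hΦapp, hΦapp, heu, hΦ'u]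
  have hΦstrict : ∀ y ∈ VS, y ≠ w → y ≠ u → Φ y < Φ w := by
    intro y hyVS hyw hyu
    have hyVert : IsVertex P y := by
      have : y ∈ vertSet P := by rw [← hVS]; exact_mod_cast hyVS
      exact this
    by_cases hyF : y ∈ F
    · have hyVF' : y ∈ VF' := by
        refine Finset.mem_erase.2 ⟨hyw, ?_⟩
        rw [← Finset.mem_coe, hVFcoe]
        exact ⟨hyVert, hyF⟩
      have := hΦ'strict y hyVF' hyu
      have hey : e y = e w := le_antisymm (he_max y (hFP hyF)) ((hFprop y hyF).2 w hwP)
      rw [hΦapp, hΦapp, hey]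
      linarith
    · have hyVout : y ∈ Vout := Finset.mem_filter.2 ⟨hyVS, hyF⟩
      have := hK y hyVout
      rw [hΦapp, hΦapp]
      nlinarith
  have hΦmax : ∀ y ∈ VS, Φ y ≤ Φ w := by
    intro y hyVS
    rcases eq_or_ne y w with rfl | hyw
    · exact le_rfl
    rcases eq_or_ne y u with rfl | hyu
    · exact hΦu.le
    exact (hΦstrict y hyVS hyw hyu).le
  -- conclude: conv {w, u} is an exposed face
  have hPhull : P = convexHull ℝ (VS : Set (EVec n)) := by
    rw [hVS]; exact aux_P_hull_vert hPS hPne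
  have hfilter : VS.filter (fun s => Φ s = Φ w) = {w, u} := by
    ext z
    simp only [Finset.mem_filter, Finset.mem_insert, Finset.mem_singleton]
    constructor
    · rintro ⟨hzVS, hzΦ⟩
      by_contra hcon
      push_neg at hcon
      exact absurd hzΦ (hΦstrict z hzVS hcon.1 hcon.2).ne
    · rintro (rfl | rfl)
      · exact ⟨hwVS, rfl⟩
      · exact ⟨huVS, hΦu⟩
  have hEdgeSet : {x ∈ P | ∀ y ∈ P, Φ y ≤ Φ x} = convexHull ℝ ({w, u} : Set (EVec n)) := by
    have := aux_face_hull Φ hΦmax ⟨w, hwVS, rfl⟩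
    rw [hPhull]
    rw [this, hfilter]
    congr 1
    simp
  have hexpEdge : IsExposed ℝ P (convexHull ℝ ({w, u} : Set (EVec n))) :=
    fun _ => ⟨Φ, hEdgeSet.symm⟩
  have hwu : w ≠ u := fun h => hune h.symm
  have hsdim1 : sdim (convexHull ℝ ({w, u} : Set (EVec n))) = 1 := by
    rw [sdim, affineSpan_convexHull, direction_affineSpan, vectorSpan_pair]
    have : w -ᵥ u = w - u := rfl
    rw [this]
    exact finrank_span_singleton (sub_ne_zero.2 hwu)
  refine ⟨u, huvf, ⟨Or.inl hexpEdge, ⟨w, subset_convexHull ℝ _ (Set.mem_insert _ _)⟩, hsdim1⟩, hcu⟩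
end stmt6aux

/-- A linear functional taking pairwise distinct values on the vertices
of a simple polytope induces (directing each edge from larger to smaller value) an
AOF-orientation of `G(P)`. -/
theorem stmt6 {n d : ℕ} (P : Set (EVec n)) (hP : IsSimplePolytope P d)
    (c : EVec n →ₗ[ℝ] ℝ)
    (hc : ∀ v w, IsVertex P v → IsVertex P w → v ≠ w → c v ≠ c w) :
    IsAOF P (fun v w => Adj P v w ∧ c w < c v) := by
  obtain ⟨⟨S, hPS⟩, -, -⟩ := hP
  refine ⟨⟨fun v w h => h.1, ?_⟩, ?_, ?_⟩
  · intro v w hadj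
    constructor
    · rintro ⟨-, hlt⟩ ⟨-, hlt'⟩
      exact absurd hlt' (not_lt.2 hlt.le)
    · intro hn
      refine ⟨hadj, ?_⟩
      obtain ⟨hv, hw⟩ := aux_adj_vertices hPS hadj
      have hne := aux_adj_ne hadj
      have hcc := hc v w hv hw hne
      rcases lt_or_gt_of_ne hcc with h | h
      · exact absurd ⟨aux_adj_symm hadj, h⟩ hn
      · exact h
  · intro v hv
    have hdec : ∀ a b : EVec n,
        Relation.TransGen (fun v w => Adj P v w ∧ c w < c v) a b → c b < c a := by
      intro a b h
      induction h with
      | single h => exact h.2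
      | tail _ h ih => exact h.2.trans ih
    exact absurd (hdec v v hv) (lt_irrefl _)
  · intro F hF hne
    have hVFfin : (vertFace P F).Finite := (aux_vertSet_finite hPS).subset Set.inter_subset_left
    have hVFne : (vertFace P F).Nonempty := aux_vertFace_nonempty hPS hF hne
    obtain ⟨w₀, hw₀mem, hw₀min⟩ := Set.exists_min_image (vertFace P F) (fun y => c y) hVFfin hVFne
    have hsink : IsSinkOn P (fun v w => Adj P v w ∧ c w < c v) (vertFace P F) w₀ := by
      refine ⟨hw₀mem, ?_⟩
      intro u hu hadj
      refine ⟨aux_adj_symm hadj, ?_⟩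
      have hne' : w₀ ≠ u := aux_adj_ne hadj
      rcases lt_or_eq_of_le (hw₀min u hu) with h | h
      · exact h
      · exact absurd h (hc w₀ u hw₀mem.1 hu.1 hne')
    refine ⟨w₀, hsink, ?_⟩
    intro y hy
    by_contra hne'
    have hymem := hy.1
    have hcy : c w₀ < c y := by
      rcases lt_or_eq_of_le (hw₀min y hymem) with h | h
      · exact h
      · exact absurd h (hc w₀ y hw₀mem.1 hymem.1 (fun hh => hne' hh.symm))
    obtain ⟨u, huVF, hadj, hcu⟩ := aux_improving_edge hPS hF hne c hymem hw₀mem hcy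
    have hOu := hy.2 u huVF hadj
    exact absurd hOu.2 (not_lt.2 hcu.le)
end
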